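/- arXiv:2312.02671 — 7 statements merged into one kernel-verified Lean document; each statement's English description precedes it below -/
import Mathlib

section
/- Suppose μ† ∈ M(Ω) and φ ∈ L²(ρ) satisfy the subgradient inclusion L_ρφ ∈ ∂J(μ†), i.e. ∫_Ω L_ρφ dν − J(ν) ≤ ∫_Ω L_ρφ dμ† − J(μ†) for all ν ∈ M(Ω). Then |L_ρφ(a,b)| ≤ V(a,b) for all (a,b) ∈ Ω, and L_ρφ(a,b) = V(a,b)·sgn(μ†)(a,b) for |μ†|-almost every (a,b) ∈ Ω, where sgn(μ†) = dμ†/d|μ†| is the polar density of μ†. -/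
open MeasureTheory RealInnerProductSpace
open scoped NNReal ENNReal

noncomputable section

/-- Integral of a real function against a signed measure, via the Jordan decomposition. -/
def sInt {α : Type*} [MeasurableSpace α] (μ : SignedMeasure α) (g : α → ℝ) : ℝ :=
  (∫ w, g w ∂μ.toJordanDecomposition.posPart) - ∫ w, g w ∂μ.toJordanDecomposition.negPart

/-- Total variation norm of a signed measure. -/
def tvNorm {α : Type*} [MeasurableSpace α] (μ : SignedMeasure α) : ℝ :=
  (μ.totalVariation Set.univ).toReal

/-- Input space ℝ^d. -/
abbrev Ed (d : ℕ) := EuclideanSpace ℝ (Fin d)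

/-- Parameter space ℝ^d × ℝ. -/
abbrev Pd (d : ℕ) := EuclideanSpace ℝ (Fin d) × ℝ

/-- The weight V(a,b) = 1 + ‖a‖ + |b|. -/
def Vw {d : ℕ} (w : Pd d) : ℝ := 1 + ‖w.1‖ + |w.2|

/-- The Barron-norm functional J(μ) = ∫ V d|μ|. -/
def Jfun {d : ℕ} {Ω : Set (Pd d)} (μ : SignedMeasure ↥Ω) : ℝ :=
  ∫ w, Vw (w : Pd d) ∂μ.totalVariation

/-- (Kμ)(x) = ∫_Ω σ(aᵀx + b) dμ(a,b). -/
def Kop {d : ℕ} (σ : ℝ → ℝ) {Ω : Set (Pd d)} (μ : SignedMeasure ↥Ω) (x : Ed d) : ℝ :=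
  sInt μ (fun w => σ (⟪(w : Pd d).1, x⟫ + (w : Pd d).2))

/-- (L_ρ φ)(a,b) = ∫ φ(x) σ(aᵀx + b) dρ(x). -/
def Lop {d : ℕ} (σ : ℝ → ℝ) (ρ : Measure (Ed d)) (φ : Ed d → ℝ) (w : Pd d) : ℝ :=
  ∫ x, φ x * σ (⟪w.1, x⟫ + w.2) ∂ρ

/-- Squared L²(ρ) norm. -/
def L2sq {d : ℕ} (ρ : Measure (Ed d)) (g : Ed d → ℝ) : ℝ := ∫ x, g x ^ 2 ∂ρ

/-- L²(ρ) norm. -/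
def L2norm {d : ℕ} (ρ : Measure (Ed d)) (g : Ed d → ℝ) : ℝ := Real.sqrt (L2sq ρ g)

/-- The loss R_f(μ) = ½‖Kμ − f‖²_{L²(ρ)}. -/
def Rf {d : ℕ} (σ : ℝ → ℝ) {Ω : Set (Pd d)} (ρ : Measure (Ed d)) (f : Ed d → ℝ)
    (μ : SignedMeasure ↥Ω) : ℝ := (1 / 2) * L2sq ρ (fun x => Kop σ μ x - f x)

/-- Bregman divergence D_J^p(μ, ν) = J(μ) − J(ν) − ∫ p d(μ − ν). -/
def DJ {d : ℕ} {Ω : Set (Pd d)} (p : Pd d → ℝ) (μ ν : SignedMeasure ↥Ω) : ℝ :=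
  Jfun μ - Jfun ν - sInt (μ - ν) (fun w => p (w : Pd d))


section Aux

variable {α : Type*} [MeasurableSpace α]

lemma toJD_toSignedMeasure (m : Measure α) [IsFiniteMeasure m] :
    m.toSignedMeasure.toJordanDecomposition
      = ⟨m, 0, Measure.MutuallySingular.zero_right⟩ := by
  apply SignedMeasure.toJordanDecomposition_eq
  show _ = (⟨m, 0, Measure.MutuallySingular.zero_right⟩ :
      JordanDecomposition α).toSignedMeasure
  unfold JordanDecomposition.toSignedMeasure
  simp [Measure.toSignedMeasure_zero]

lemma sInt_toSignedMeasure (m : Measure α) [IsFiniteMeasure m] (g : α → ℝ) :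
    sInt m.toSignedMeasure g = ∫ x, g x ∂m := by
  rw [sInt, toJD_toSignedMeasure]; simp

lemma tv_toSignedMeasure (m : Measure α) [IsFiniteMeasure m] :
    m.toSignedMeasure.totalVariation = m := by
  unfold SignedMeasure.totalVariation
  rw [toJD_toSignedMeasure]; simp

lemma sInt_neg (μ : SignedMeasure α) (g : α → ℝ) : sInt (-μ) g = - sInt μ g := by
  rw [sInt, sInt, SignedMeasure.toJordanDecomposition_neg]
  simp [JordanDecomposition.neg_posPart, JordanDecomposition.neg_negPart]

lemma sInt_nnsmul (r : ℝ≥0) (μ : SignedMeasure α) (g : α → ℝ) :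
    sInt (r • μ) g = (r : ℝ) * sInt μ g := by
  rw [sInt, sInt, SignedMeasure.toJordanDecomposition_smul]
  simp [integral_smul_nnreal_measure, NNReal.smul_def]
  ring

lemma tv_nnsmul (r : ℝ≥0) (μ : SignedMeasure α) :
    (r • μ).totalVariation = r • μ.totalVariation := by
  unfold SignedMeasure.totalVariation
  rw [SignedMeasure.toJordanDecomposition_smul]
  simp [smul_add]

lemma sInt_zero (g : α → ℝ) : sInt (0 : SignedMeasure α) g = 0 := by
  rw [sInt, SignedMeasure.toJordanDecomposition_zero]; simp

end Aux

/-- The polar density sgn(μ) = dμ/d|μ| of a signed measure. -/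
def polarDensity {α : Type*} [MeasurableSpace α] (μ : SignedMeasure α) : α → ℝ :=
  fun w => (μ.toJordanDecomposition.posPart.rnDeriv μ.totalVariation w).toReal
    - (μ.toJordanDecomposition.negPart.rnDeriv μ.totalVariation w).toReal

/-- If L_ρφ ∈ ∂J(μ†), then |L_ρφ| ≤ V on Ω and
L_ρφ = V·sgn(μ†) holds |μ†|-almost everywhere (source condition). -/
theorem source_condition
    {d : ℕ} (Ω : Set (Pd d)) (hΩ : IsCompact Ω)
    (ρ : Measure (Ed d)) [IsProbabilityMeasure ρ]
    (hρ2 : Integrable (fun x : Ed d => ‖x‖ ^ 2) ρ)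
    (σ : ℝ → ℝ) (Lσ : NNReal) (hσ : LipschitzWith Lσ σ)
    (φ : Ed d → ℝ) (hφm : Measurable φ) (hφ2 : MemLp φ 2 ρ)
    (μdag : SignedMeasure ↥Ω)
    (hsub : ∀ ν : SignedMeasure ↥Ω,
      sInt ν (fun w => Lop σ ρ φ (w : Pd d)) - Jfun ν ≤
        sInt μdag (fun w => Lop σ ρ φ (w : Pd d)) - Jfun μdag) :
    (∀ w ∈ Ω, |Lop σ ρ φ w| ≤ Vw w) ∧
      ∀ᵐ (w : ↥Ω) ∂μdag.totalVariation,
        Lop σ ρ φ (w : Pd d) = Vw (w : Pd d) * polarDensity μdag w := by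
  classical
  -- Step A : the optimal value is 0
  have h0 : (0:ℝ) ≤ sInt μdag (fun w => Lop σ ρ φ (w : Pd d)) - Jfun μdag := by
    have h := hsub 0
    rw [sInt_zero] at h
    have hJ0 : Jfun (0 : SignedMeasure ↥Ω) = 0 := by
      unfold Jfun
      rw [SignedMeasure.totalVariation_zero]; simp
    rw [hJ0] at h; linarith
  have h2 : sInt μdag (fun w => Lop σ ρ φ (w : Pd d)) - Jfun μdag ≤ 0 := by
    have h := hsub ((2:ℝ≥0) • μdag)
    rw [sInt_nnsmul] at h
    have hJ2 : Jfun ((2:ℝ≥0) • μdag) = 2 * Jfun μdag := by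
      unfold Jfun
      rw [tv_nnsmul, integral_smul_nnreal_measure]
      norm_num [NNReal.smul_def]
    rw [hJ2] at h
    push_cast at h
    linarith
  have hC : sInt μdag (fun w => Lop σ ρ φ (w : Pd d)) = Jfun μdag := by linarith
  -- Part 1 : pointwise bound
  have hpt : ∀ w ∈ Ω, |Lop σ ρ φ w| ≤ Vw w := by
    intro w hw
    set w0 : ↥Ω := ⟨w, hw⟩ with hw0
    set m : Measure ↥Ω := Measure.dirac w0 with hm
    have hsInt : sInt m.toSignedMeasure (fun w => Lop σ ρ φ (w : Pd d)) = Lop σ ρ φ w := by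
      rw [sInt_toSignedMeasure, hm, integral_dirac]
    have hJm : Jfun m.toSignedMeasure = Vw w := by
      unfold Jfun
      rw [tv_toSignedMeasure, hm, integral_dirac]
    have hub := hsub m.toSignedMeasure
    rw [hsInt, hJm] at hub
    have hlb := hsub (-(m.toSignedMeasure))
    rw [sInt_neg, hsInt] at hlb
    have hJneg : Jfun (-(m.toSignedMeasure)) = Vw w := by
      unfold Jfun
      rw [SignedMeasure.totalVariation_neg]
      rw [tv_toSignedMeasure, hm, integral_dirac]
    rw [hJneg] at hlb
    exact abs_le.mpr ⟨by linarith, by linarith⟩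
  refine ⟨hpt, ?_⟩
  -- integrability facts on ρ
  have hφ1 : Integrable (fun x => |φ x|) ρ := (hφ2.integrable one_le_two).abs
  have hφx : Integrable (fun x => |φ x| * ‖x‖) ρ := by
    refine Integrable.mono' ((hφ2.integrable_sq.add hρ2).div_const 2)
      (hφm.norm.mul measurable_norm).aestronglyMeasurable ?_
    filter_upwards with x
    rw [Real.norm_eq_abs, abs_of_nonneg (by positivity)]
    simp only [Pi.add_apply]
    nlinarith [sq_nonneg (|φ x| - ‖x‖), sq_abs (φ x), abs_nonneg (φ x), norm_nonneg x]
  have hσb : ∀ u : ℝ, |σ u| ≤ |σ 0| + (Lσ : ℝ) * |u| := by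
    intro u
    have := hσ.dist_le_mul u 0
    rw [Real.dist_eq, Real.dist_eq, sub_zero] at this
    calc |σ u| ≤ |σ u - σ 0| + |σ 0| := by
          have := abs_sub_abs_le_abs_sub (σ u) (σ 0); linarith [abs_abs (σ 0)]
      _ ≤ |σ 0| + (Lσ : ℝ) * |u| := by linarith
  have hIntσ : ∀ w : Pd d, Integrable (fun x => φ x * σ (⟪w.1, x⟫ + w.2)) ρ := by
    intro w
    have hcont : Continuous fun x : Ed d => σ (⟪w.1, x⟫ + w.2) :=
      hσ.continuous.comp ((continuous_const.inner continuous_id).add continuous_const)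
    refine Integrable.mono'
      (((hφ1.const_mul (|σ 0| + (Lσ : ℝ) * |w.2|)).add
        ((hφx.const_mul ((Lσ : ℝ) * ‖w.1‖)))) )
      (hφm.aestronglyMeasurable.mul hcont.measurable.aestronglyMeasurable) ?_
    filter_upwards with x
    rw [Real.norm_eq_abs, abs_mul]
    have h1 : |σ (⟪w.1, x⟫ + w.2)| ≤ |σ 0| + (Lσ : ℝ) * (‖w.1‖ * ‖x‖ + |w.2|) := by
      refine (hσb _).trans ?_
      have : |⟪w.1, x⟫ + w.2| ≤ ‖w.1‖ * ‖x‖ + |w.2| :=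
        (abs_add_le _ _).trans (by linarith [abs_real_inner_le_norm w.1 x])
      nlinarith [Lσ.coe_nonneg]
    have h0 : (0:ℝ) ≤ |φ x| := abs_nonneg _
    simp only [Pi.add_apply]
    nlinarith [abs_nonneg (σ (⟪w.1, x⟫ + w.2))]
  -- continuity of Lop
  set A : ℝ := ∫ x, |φ x| * ‖x‖ ∂ρ with hA
  set B : ℝ := ∫ x, |φ x| ∂ρ with hB
  have hA0 : 0 ≤ A := integral_nonneg fun x => by positivity
  have hB0 : 0 ≤ B := integral_nonneg fun x => abs_nonneg _
  have hkey : ∀ v w : Pd d,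
      |Lop σ ρ φ v - Lop σ ρ φ w| ≤ (Lσ : ℝ) * (A * ‖v.1 - w.1‖ + B * |v.2 - w.2|) := by
    intro v w
    have hsub' : Lop σ ρ φ v - Lop σ ρ φ w
        = ∫ x, (φ x * σ (⟪v.1, x⟫ + v.2) - φ x * σ (⟪w.1, x⟫ + w.2)) ∂ρ := by
      rw [integral_sub (hIntσ v) (hIntσ w)]; rfl
    rw [hsub']
    have hRint : Integrable
        (fun x => (Lσ : ℝ) * (‖v.1 - w.1‖ * (|φ x| * ‖x‖) + |v.2 - w.2| * |φ x|)) ρ :=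
      ((hφx.const_mul ‖v.1 - w.1‖).add (hφ1.const_mul |v.2 - w.2|)).const_mul _
    calc |∫ x, (φ x * σ (⟪v.1, x⟫ + v.2) - φ x * σ (⟪w.1, x⟫ + w.2)) ∂ρ|
        ≤ ∫ x, |φ x * σ (⟪v.1, x⟫ + v.2) - φ x * σ (⟪w.1, x⟫ + w.2)| ∂ρ := by
          simpa [Real.norm_eq_abs] using
            norm_integral_le_integral_norm
              (fun x => φ x * σ (⟪v.1, x⟫ + v.2) - φ x * σ (⟪w.1, x⟫ + w.2)) (μ := ρ)
      _ ≤ ∫ x, (Lσ : ℝ) * (‖v.1 - w.1‖ * (|φ x| * ‖x‖) + |v.2 - w.2| * |φ x|) ∂ρ := by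
          refine integral_mono ((hIntσ v).sub (hIntσ w)).abs hRint fun x => ?_
          rw [← mul_sub, abs_mul]
          have hd : |σ (⟪v.1, x⟫ + v.2) - σ (⟪w.1, x⟫ + w.2)|
              ≤ (Lσ : ℝ) * (‖v.1 - w.1‖ * ‖x‖ + |v.2 - w.2|) := by
            have hl := hσ.dist_le_mul (⟪v.1, x⟫ + v.2) (⟪w.1, x⟫ + w.2)
            rw [Real.dist_eq, Real.dist_eq] at hl
            have hu : |⟪v.1, x⟫ + v.2 - (⟪w.1, x⟫ + w.2)| ≤ ‖v.1 - w.1‖ * ‖x‖ + |v.2 - w.2| := by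
              have hi : ⟪v.1, x⟫ - ⟪w.1, x⟫ = ⟪v.1 - w.1, x⟫ := (inner_sub_left _ _ _).symm
              calc |⟪v.1, x⟫ + v.2 - (⟪w.1, x⟫ + w.2)|
                  = |(⟪v.1, x⟫ - ⟪w.1, x⟫) + (v.2 - w.2)| := by ring_nf
                _ ≤ |⟪v.1, x⟫ - ⟪w.1, x⟫| + |v.2 - w.2| := abs_add_le _ _
                _ ≤ ‖v.1 - w.1‖ * ‖x‖ + |v.2 - w.2| := by
                    rw [hi]; linarith [abs_real_inner_le_norm (v.1 - w.1) x]
            nlinarith [Lσ.coe_nonneg]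
          have h0 : (0:ℝ) ≤ |φ x| := abs_nonneg _
          nlinarith [abs_nonneg (σ (⟪v.1, x⟫ + v.2) - σ (⟪w.1, x⟫ + w.2)), Lσ.coe_nonneg,
            norm_nonneg x]
      _ = (Lσ : ℝ) * (A * ‖v.1 - w.1‖ + B * |v.2 - w.2|) := by
          rw [integral_const_mul, integral_add (hφx.const_mul _) (hφ1.const_mul _),
            integral_const_mul, integral_const_mul, ← hA, ← hB]
          ring
  have hLcont : Continuous (Lop σ ρ φ) := by
    refine (LipschitzWith.of_dist_le_mul (K := Real.toNNReal ((Lσ : ℝ) * (A + B)))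
      (f := Lop σ ρ φ) ?_).continuous
    intro v w
    rw [Real.dist_eq, Real.coe_toNNReal _ (by positivity)]
    refine (hkey v w).trans ?_
    have h1 : ‖v.1 - w.1‖ ≤ dist v w := by
      rw [← dist_eq_norm, Prod.dist_eq]; exact le_max_left _ _
    have h2 : |v.2 - w.2| ≤ dist v w := by
      rw [← Real.dist_eq, Prod.dist_eq]; exact le_max_right _ _
    have hd0 : (0:ℝ) ≤ dist v w := dist_nonneg
    calc (Lσ : ℝ) * (A * ‖v.1 - w.1‖ + B * |v.2 - w.2|)
        ≤ (Lσ : ℝ) * (A * dist v w + B * dist v w) := by gcongr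
      _ = (Lσ : ℝ) * (A + B) * dist v w := by ring
  -- notation for the Jordan decomposition pieces
  set pos : Measure ↥Ω := μdag.toJordanDecomposition.posPart with hposd
  set neg : Measure ↥Ω := μdag.toJordanDecomposition.negPart with hnegd
  set tv : Measure ↥Ω := μdag.totalVariation with htvd
  have htv : tv = pos + neg := rfl
  haveI : IsFiniteMeasure tv := by rw [htv]; infer_instance
  have hpac : pos ≪ tv := Measure.absolutelyContinuous_of_le (htv ▸ Measure.le_add_right le_rfl)
  have hnac : neg ≪ tv := by
    refine Measure.absolutelyContinuous_of_le ?_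
    rw [htv]; exact fun s => le_add_left le_rfl
  -- bounds on Ω
  have hVcont : Continuous (fun w : Pd d => Vw w) := by
    unfold Vw
    exact (continuous_const.add continuous_fst.norm).add continuous_snd.abs
  obtain ⟨CV, hCV⟩ := hΩ.exists_bound_of_continuousOn hVcont.continuousOn
  have hVnn : ∀ w : Pd d, 0 ≤ Vw w := by
    intro w; unfold Vw; positivity
  have hVle : ∀ w : ↥Ω, Vw (w : Pd d) ≤ CV := fun w =>
    (le_abs_self _).trans (by rw [← Real.norm_eq_abs]; exact hCV _ w.2)
  have hVtv : Integrable (fun w : ↥Ω => Vw (w : Pd d)) tv := by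
    refine Integrable.mono' (integrable_const CV)
      ((hVcont.comp continuous_subtype_val).aestronglyMeasurable) ?_
    filter_upwards with w
    rw [Real.norm_eq_abs, abs_of_nonneg (hVnn _)]
    exact hVle w
  have hLb : ∀ w : ↥Ω, ‖Lop σ ρ φ (w : Pd d)‖ ≤ CV := fun w =>
    (hpt _ w.2).trans (hVle w)
  have hLpos : Integrable (fun w : ↥Ω => Lop σ ρ φ (w : Pd d)) pos :=
    Integrable.mono' (integrable_const CV)
      (hLcont.comp continuous_subtype_val).aestronglyMeasurable
      (Filter.Eventually.of_forall hLb)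
  have hLneg : Integrable (fun w : ↥Ω => Lop σ ρ φ (w : Pd d)) neg :=
    Integrable.mono' (integrable_const CV)
      (hLcont.comp continuous_subtype_val).aestronglyMeasurable
      (Filter.Eventually.of_forall hLb)
  have hfi : Integrable (fun w : ↥Ω => (pos.rnDeriv tv w).toReal • Lop σ ρ φ (w : Pd d)) tv :=
    (integrable_rnDeriv_smul_iff hpac).mpr hLpos
  have hgi : Integrable (fun w : ↥Ω => (neg.rnDeriv tv w).toReal • Lop σ ρ φ (w : Pd d)) tv :=
    (integrable_rnDeriv_smul_iff hnac).mpr hLneg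
  have hEpos : ∫ w, Lop σ ρ φ (w : Pd d) ∂pos
      = ∫ w, (pos.rnDeriv tv w).toReal • Lop σ ρ φ (w : Pd d) ∂tv :=
    (integral_rnDeriv_smul hpac).symm
  have hEneg : ∫ w, Lop σ ρ φ (w : Pd d) ∂neg
      = ∫ w, (neg.rnDeriv tv w).toReal • Lop σ ρ φ (w : Pd d) ∂tv :=
    (integral_rnDeriv_smul hnac).symm
  have hsInt2 : sInt μdag (fun w => Lop σ ρ φ (w : Pd d))
      = ∫ w, Lop σ ρ φ (w : Pd d) * polarDensity μdag w ∂tv := by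
    show (∫ w, Lop σ ρ φ (w : Pd d) ∂pos) - (∫ w, Lop σ ρ φ (w : Pd d) ∂neg) = _
    rw [hEpos, hEneg, ← integral_sub hfi hgi]
    refine integral_congr_ae (Filter.Eventually.of_forall fun w => ?_)
    show _ = Lop σ ρ φ (w : Pd d) * polarDensity μdag w
    unfold polarDensity
    rw [← hposd, ← hnegd, ← htvd]
    simp only [smul_eq_mul]
    ring
  obtain ⟨S, hSm, hS1, hS2⟩ := μdag.toJordanDecomposition.mutuallySingular
  have hfS : ∀ᵐ w ∂tv, w ∈ S → pos.rnDeriv tv w = 0 := by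
    have hz : ∫⁻ w in S, pos.rnDeriv tv w ∂tv = 0 :=
      le_antisymm ((Measure.setLIntegral_rnDeriv_le S).trans (by rw [← hposd] at hS1; rw [hS1]))
        zero_le
    have h0 : pos.rnDeriv tv =ᵐ[tv.restrict S] 0 :=
      (lintegral_eq_zero_iff (Measure.measurable_rnDeriv pos tv)).mp hz
    exact (ae_restrict_iff' hSm).mp h0
  have hgS : ∀ᵐ w ∂tv, w ∈ Sᶜ → neg.rnDeriv tv w = 0 := by
    have hz : ∫⁻ w in Sᶜ, neg.rnDeriv tv w ∂tv = 0 :=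
      le_antisymm ((Measure.setLIntegral_rnDeriv_le Sᶜ).trans (by rw [← hnegd] at hS2; rw [hS2]))
        zero_le
    have h0 : neg.rnDeriv tv =ᵐ[tv.restrict Sᶜ] 0 :=
      (lintegral_eq_zero_iff (Measure.measurable_rnDeriv neg tv)).mp hz
    exact (ae_restrict_iff' hSm.compl).mp h0
  have hsum : ∀ᵐ w ∂tv, pos.rnDeriv tv w + neg.rnDeriv tv w = 1 := by
    have h1 : tv.rnDeriv tv =ᵐ[tv] fun _ => 1 := Measure.rnDeriv_self tv
    have h2 : (pos + neg).rnDeriv tv =ᵐ[tv] pos.rnDeriv tv + neg.rnDeriv tv :=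
      Measure.rnDeriv_add' pos neg tv
    rw [← htv] at h2
    filter_upwards [h1, h2] with w e1 e2
    have := e2.symm.trans e1
    simpa using this
  have hsgn : ∀ᵐ w ∂tv, polarDensity μdag w = 1 ∨ polarDensity μdag w = -1 := by
    filter_upwards [hsum, hfS, hgS] with w h1 hf hg
    by_cases hwS : w ∈ S
    · right
      have hp := hf hwS
      rw [hp, zero_add] at h1
      unfold polarDensity
      rw [← hposd, ← hnegd, ← htvd, hp, h1]
      simp
    · left
      have hn := hg hwS
      rw [hn, add_zero] at h1
      unfold polarDensity
      rw [← hposd, ← hnegd, ← htvd, hn, h1]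
      simp
  have hLP : Integrable (fun w : ↥Ω => Lop σ ρ φ (w : Pd d) * polarDensity μdag w) tv := by
    refine (hfi.sub hgi).congr (Filter.Eventually.of_forall fun w => ?_)
    show _ = Lop σ ρ φ (w : Pd d) * polarDensity μdag w
    unfold polarDensity
    rw [← hposd, ← hnegd, ← htvd]
    simp only [smul_eq_mul, Pi.sub_apply]
    ring
  have hJ : Jfun μdag = ∫ w, Vw (w : Pd d) ∂tv := rfl
  have hzero : ∫ w, (Vw (w : Pd d) - Lop σ ρ φ (w : Pd d) * polarDensity μdag w) ∂tv = 0 := by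
    rw [integral_sub hVtv hLP, ← hsInt2, hC, hJ, sub_self]
  have hnn : 0 ≤ᵐ[tv]
      fun w : ↥Ω => Vw (w : Pd d) - Lop σ ρ φ (w : Pd d) * polarDensity μdag w := by
    filter_upwards [hsgn] with w hs
    have h1 : |polarDensity μdag w| = 1 := by rcases hs with h | h <;> simp [h]
    have h2 : Lop σ ρ φ (w : Pd d) * polarDensity μdag w ≤ |Lop σ ρ φ (w : Pd d)| := by
      calc Lop σ ρ φ (w : Pd d) * polarDensity μdag w
          ≤ |Lop σ ρ φ (w : Pd d) * polarDensity μdag w| := le_abs_self _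
        _ = |Lop σ ρ φ (w : Pd d)| * |polarDensity μdag w| := abs_mul _ _
        _ = |Lop σ ρ φ (w : Pd d)| := by rw [h1, mul_one]
    have h3 := hpt _ w.2
    show (0:ℝ) ≤ _
    linarith
  have hae := (integral_eq_zero_iff_of_nonneg_ae hnn (hVtv.sub hLP)).mp hzero
  filter_upwards [hae, hsgn] with w h1 h2
  have h1' : Vw (w : Pd d) - Lop σ ρ φ (w : Pd d) * polarDensity μdag w = 0 := h1
  rcases h2 with h | h <;> rw [h] at h1' ⊢ <;> linarith

end
end

section
/- Let t ≥ 0, r ∈ L²(ρ) with ‖r‖_{L²(ρ)} ≤ t‖f‖_{L²(ρ)}, and μ ∈ M(Ω) such that J(μ) = ∫_Ω L_ρ r dμ (Fenchel equality, i.e. L_ρ r ∈ ∂J(μ) with equality in the pairing) and ‖Kμ − f‖_{L²(ρ)} ≤ ‖f‖_{L²(ρ)}. Then ‖μ‖_{M(Ω)} ≤ J(μ) ≤ 2t‖f‖²_{L²(ρ)}. -/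
open MeasureTheory RealInnerProductSpace

noncomputable section

lemma L2norm_eq_rpow {d : ℕ} (ρ : Measure (Ed d)) (g : Ed d → ℝ) :
    L2norm ρ g = (∫ x, ‖g x‖ ^ (2:ℝ) ∂ρ) ^ ((1:ℝ)/2) := by
  rw [L2norm, L2sq, Real.sqrt_eq_rpow]
  congr 1
  refine integral_congr_ae (Filter.Eventually.of_forall fun x => ?_)
  have h2 : ‖g x‖ ^ (2:ℝ) = ‖g x‖ ^ (2:ℕ) := by
    rw [show (2:ℝ) = ((2:ℕ):ℝ) by norm_num, Real.rpow_natCast]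
  show g x ^ 2 = ‖g x‖ ^ (2:ℝ)
  rw [h2]; simp [sq_abs]

lemma L2norm_eq_toReal {d : ℕ} {ρ : Measure (Ed d)} {g : Ed d → ℝ} (hg : MemLp g 2 ρ) :
    L2norm ρ g = (eLpNorm g 2 ρ).toReal := by
  rw [hg.eLpNorm_eq_integral_rpow_norm two_ne_zero ENNReal.ofNat_ne_top,
    ENNReal.toReal_ofReal (Real.rpow_nonneg (integral_nonneg fun x => by positivity) _),
    L2norm_eq_rpow]
  norm_num

lemma L2norm_add_le {d : ℕ} {ρ : Measure (Ed d)} {u v : Ed d → ℝ}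
    (hu : MemLp u 2 ρ) (hv : MemLp v 2 ρ) :
    L2norm ρ (fun x => u x + v x) ≤ L2norm ρ u + L2norm ρ v := by
  have he : (fun x => u x + v x) = u + v := rfl
  rw [he, L2norm_eq_toReal (hu.add hv), L2norm_eq_toReal hu, L2norm_eq_toReal hv]
  rw [← ENNReal.toReal_add hu.eLpNorm_ne_top hv.eLpNorm_ne_top]
  exact ENNReal.toReal_mono (ENNReal.add_ne_top.mpr ⟨hu.eLpNorm_ne_top, hv.eLpNorm_ne_top⟩)
    (eLpNorm_add_le hu.aestronglyMeasurable hv.aestronglyMeasurable one_le_two)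

lemma abs_integral_mul_le {d : ℕ} {ρ : Measure (Ed d)} {g h : Ed d → ℝ}
    (hg : MemLp g 2 ρ) (hh : MemLp h 2 ρ) :
    |∫ x, g x * h x ∂ρ| ≤ L2norm ρ g * L2norm ρ h := by
  have h1 : |∫ x, g x * h x ∂ρ| ≤ ∫ x, ‖g x * h x‖ ∂ρ := by
    rw [← Real.norm_eq_abs]; exact norm_integral_le_integral_norm _
  have h1' : (∫ x, ‖g x * h x‖ ∂ρ) = ∫ x, ‖g x‖ * ‖h x‖ ∂ρ := by simp [norm_mul]
  have hpq : Real.HolderConjugate 2 2 := Real.HolderConjugate.two_two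
  have h2 : (ENNReal.ofReal (2:ℝ)) = 2 := by norm_num [ENNReal.ofReal_ofNat]
  have hH := integral_mul_norm_le_Lp_mul_Lq (μ := ρ) hpq (by rw [h2]; exact hg)
    (by rw [h2]; exact hh)
  rw [L2norm_eq_rpow, L2norm_eq_rpow]
  exact (h1.trans_eq h1').trans hH

/-- The key Fubini step. -/
lemma fubini_aux {d : ℕ} {Ω : Set (Pd d)} (hΩ : IsCompact Ω)
    (ρ : Measure (Ed d)) [IsProbabilityMeasure ρ]
    (hρ2 : Integrable (fun x : Ed d => ‖x‖ ^ 2) ρ)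
    (σ : ℝ → ℝ) (Lσ : NNReal) (hσ : LipschitzWith Lσ σ)
    (r : Ed d → ℝ) (hrm : Measurable r) (hr2 : MemLp r 2 ρ)
    (Q : Measure ↥Ω) [IsFiniteMeasure Q] :
    (∫ w, Lop σ ρ r (w : Pd d) ∂Q
      = ∫ x, r x * (∫ w, σ (⟪((w : Pd d)).1, x⟫ + ((w : Pd d)).2) ∂Q) ∂ρ)
    ∧ Integrable (fun x => r x * ∫ w, σ (⟪((w : Pd d)).1, x⟫ + ((w : Pd d)).2) ∂Q) ρ := by
  obtain ⟨C0, hC0⟩ := (Bornology.IsBounded.exists_norm_le hΩ.isBounded)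
  set C : ℝ := max C0 0 with hCdef
  have hC : 0 ≤ C := le_max_right _ _
  have hCw : ∀ w : ↥Ω, ‖(w : Pd d)‖ ≤ C := fun w => (hC0 _ w.2).trans (le_max_left _ _)
  set g : Ed d → ℝ := fun x => |σ 0| + (Lσ : ℝ) * (C * ‖x‖ + C) with hgdef
  have hg0 : ∀ x, 0 ≤ g x := fun x => by positivity
  have hbound : ∀ (w : ↥Ω) (x : Ed d), |σ (⟪((w : Pd d)).1, x⟫ + ((w : Pd d)).2)| ≤ g x := by
    intro w x
    set u : ℝ := ⟪((w : Pd d)).1, x⟫ + ((w : Pd d)).2 with hu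
    have h1 : |σ u - σ 0| ≤ (Lσ : ℝ) * |u| := by
      simpa [Real.dist_eq] using hσ.dist_le_mul u 0
    have h2 : |u| ≤ C * ‖x‖ + C := by
      calc |u| ≤ |⟪((w : Pd d)).1, x⟫| + |((w : Pd d)).2| := abs_add_le _ _
        _ ≤ ‖((w : Pd d)).1‖ * ‖x‖ + |((w : Pd d)).2| := by
            gcongr; exact abs_real_inner_le_norm _ _
        _ ≤ C * ‖x‖ + C := by
            gcongr
            · exact (norm_fst_le (w : Pd d)).trans (hCw w)
            · exact (norm_snd_le (w : Pd d)).trans (hCw w)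
    calc |σ u| ≤ |σ u - σ 0| + |σ 0| := by
          have := abs_add_le (σ u - σ 0) (σ 0); simpa using this
      _ ≤ (Lσ : ℝ) * |u| + |σ 0| := by gcongr
      _ ≤ (Lσ : ℝ) * (C * ‖x‖ + C) + |σ 0| := by gcongr
      _ = g x := by ring
  -- g is in L²
  have hnorm2 : MemLp (fun x : Ed d => ‖x‖) 2 ρ := by
    rw [memLp_two_iff_integrable_sq measurable_norm.aestronglyMeasurable]
    exact hρ2
  have hg2 : MemLp g 2 ρ := by
    have h1 : MemLp (fun x : Ed d => (Lσ : ℝ) * (C * ‖x‖ + C)) 2 ρ :=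
      (((hnorm2.const_mul C).add (memLp_const C)).const_mul _)
    exact (memLp_const (μ := ρ) (|σ 0|)).add h1
  -- |r| * g is integrable
  have hhalf : (1 : ENNReal) / 1 = 1 / 2 + 1 / 2 := by
    simp [ENNReal.inv_two_add_inv_two]
  have hrg : Integrable (fun x => |r x| * g x) ρ := by
    have := (hg2.smul (hr2.norm) : MemLp ((fun x => ‖r x‖) • g) 1 ρ)
    rw [memLp_one_iff_integrable] at this
    simpa [Pi.smul_apply, smul_eq_mul, Real.norm_eq_abs, Pi.mul_def] using this
  -- continuity/measurability of the kernel
  have hcont : Continuous (fun z : ↥Ω × Ed d =>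
      σ (⟪((z.1 : Pd d)).1, z.2⟫ + ((z.1 : Pd d)).2)) := by
    apply hσ.continuous.comp
    exact (continuous_inner.comp ((continuous_fst.subtype_val.fst).prodMk
      continuous_snd)).add (continuous_fst.subtype_val.snd)
  have hFsm : StronglyMeasurable (fun z : ↥Ω × Ed d =>
      r z.2 * σ (⟪((z.1 : Pd d)).1, z.2⟫ + ((z.1 : Pd d)).2)) :=
    ((hrm.comp measurable_snd).mul hcont.measurable).stronglyMeasurable
  -- integrability over the product
  have hinner : ∀ w : ↥Ω,
      Integrable (fun x => r x * σ (⟪((w : Pd d)).1, x⟫ + ((w : Pd d)).2)) ρ := by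
    intro w
    refine hrg.mono' ((hrm.mul (hσ.continuous.measurable.comp
      (((Continuous.inner continuous_const continuous_id).add continuous_const).measurable : Measurable fun x : Ed d => ⟪((w : Pd d)).1, x⟫ + ((w : Pd d)).2))).aestronglyMeasurable)
      (Filter.Eventually.of_forall fun x => ?_)
    rw [Real.norm_eq_abs, abs_mul]
    exact mul_le_mul_of_nonneg_left (hbound w x) (abs_nonneg _)
  have hFint : Integrable (fun z : ↥Ω × Ed d =>
      r z.2 * σ (⟪((z.1 : Pd d)).1, z.2⟫ + ((z.1 : Pd d)).2)) (Q.prod ρ) := by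
    rw [integrable_prod_iff hFsm.aestronglyMeasurable]
    constructor
    · exact Filter.Eventually.of_forall fun w => hinner w
    · refine (integrable_const (∫ x, |r x| * g x ∂ρ)).mono'
        (hFsm.norm.integral_prod_right'.aestronglyMeasurable) ?_
      refine Filter.Eventually.of_forall fun w => ?_
      rw [Real.norm_eq_abs, abs_of_nonneg (integral_nonneg fun x => norm_nonneg _)]
      refine integral_mono (hinner w).norm hrg fun x => ?_
      rw [Real.norm_eq_abs, abs_mul]
      exact mul_le_mul_of_nonneg_left (hbound w x) (abs_nonneg _)
  have hswap := integral_integral_swap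
    (f := fun (w : ↥Ω) (x : Ed d) => r x * σ (⟪((w : Pd d)).1, x⟫ + ((w : Pd d)).2)) hFint
  constructor
  · rw [show (fun w : ↥Ω => Lop σ ρ r (w : Pd d))
        = fun w : ↥Ω => ∫ x, r x * σ (⟪((w : Pd d)).1, x⟫ + ((w : Pd d)).2) ∂ρ from rfl]
    rw [hswap]
    refine integral_congr_ae (Filter.Eventually.of_forall fun x => ?_)
    exact integral_const_mul (μ := Q) (r x) _
  · have := hFint.integral_prod_right
    refine this.congr (Filter.Eventually.of_forall fun x => ?_)
    exact integral_const_mul (μ := Q) (r x) _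


lemma memℒp_kernel_int {d : ℕ} {Ω : Set (Pd d)} (hΩ : IsCompact Ω)
    (ρ : Measure (Ed d)) [IsProbabilityMeasure ρ]
    (hρ2 : Integrable (fun x : Ed d => ‖x‖ ^ 2) ρ)
    (σ : ℝ → ℝ) (Lσ : NNReal) (hσ : LipschitzWith Lσ σ)
    (Q : Measure ↥Ω) [IsFiniteMeasure Q] :
    MemLp (fun x => ∫ w, σ (⟪((w : Pd d)).1, x⟫ + ((w : Pd d)).2) ∂Q) 2 ρ := by
  obtain ⟨C0, hC0⟩ := (Bornology.IsBounded.exists_norm_le hΩ.isBounded)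
  set C : ℝ := max C0 0 with hCdef
  have hC : 0 ≤ C := le_max_right _ _
  have hCw : ∀ w : ↥Ω, ‖(w : Pd d)‖ ≤ C := fun w => (hC0 _ w.2).trans (le_max_left _ _)
  set g : Ed d → ℝ := fun x => |σ 0| + (Lσ : ℝ) * (C * ‖x‖ + C) with hgdef
  have hg0 : ∀ x, 0 ≤ g x := fun x => by positivity
  have hbound : ∀ (w : ↥Ω) (x : Ed d), |σ (⟪((w : Pd d)).1, x⟫ + ((w : Pd d)).2)| ≤ g x := by
    intro w x
    set u : ℝ := ⟪((w : Pd d)).1, x⟫ + ((w : Pd d)).2 with hu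
    have h1 : |σ u - σ 0| ≤ (Lσ : ℝ) * |u| := by
      simpa [Real.dist_eq] using hσ.dist_le_mul u 0
    have h2 : |u| ≤ C * ‖x‖ + C := by
      calc |u| ≤ |⟪((w : Pd d)).1, x⟫| + |((w : Pd d)).2| := abs_add_le _ _
        _ ≤ ‖((w : Pd d)).1‖ * ‖x‖ + |((w : Pd d)).2| := by
            gcongr; exact abs_real_inner_le_norm _ _
        _ ≤ C * ‖x‖ + C := by
            gcongr
            · exact (norm_fst_le (w : Pd d)).trans (hCw w)
            · exact (norm_snd_le (w : Pd d)).trans (hCw w)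
    calc |σ u| ≤ |σ u - σ 0| + |σ 0| := by
          have := abs_add_le (σ u - σ 0) (σ 0); simpa using this
      _ ≤ (Lσ : ℝ) * |u| + |σ 0| := by gcongr
      _ ≤ (Lσ : ℝ) * (C * ‖x‖ + C) + |σ 0| := by gcongr
      _ = g x := by ring
  have hnorm2 : MemLp (fun x : Ed d => ‖x‖) 2 ρ := by
    rw [memLp_two_iff_integrable_sq measurable_norm.aestronglyMeasurable]
    exact hρ2
  have hg2 : MemLp g 2 ρ := by
    have h1 : MemLp (fun x : Ed d => (Lσ : ℝ) * (C * ‖x‖ + C)) 2 ρ :=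
      (((hnorm2.const_mul C).add (memLp_const C)).const_mul _)
    exact (memLp_const (μ := ρ) (|σ 0|)).add h1
  have hcont : Continuous (fun z : Ed d × ↥Ω =>
      σ (⟪((z.2 : Pd d)).1, z.1⟫ + ((z.2 : Pd d)).2)) := by
    apply hσ.continuous.comp
    exact (continuous_inner.comp ((continuous_snd.subtype_val.fst).prodMk
      continuous_fst)).add (continuous_snd.subtype_val.snd)
  have hsm : StronglyMeasurable (fun x : Ed d =>
      ∫ w, σ (⟪((w : Pd d)).1, x⟫ + ((w : Pd d)).2) ∂Q) :=
    (hcont.stronglyMeasurable).integral_prod_right'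
  set m : ℝ := (Q Set.univ).toReal with hm
  have hQint : ∀ x : Ed d,
      Integrable (fun w : ↥Ω => σ (⟪((w : Pd d)).1, x⟫ + ((w : Pd d)).2)) Q := by
    intro x
    refine (integrable_const (g x)).mono'
      ((hcont.comp (Continuous.prodMk_right x)).aestronglyMeasurable) ?_
    exact Filter.Eventually.of_forall fun w => by
      rw [Real.norm_eq_abs]; exact hbound w x
  refine (hg2.const_mul m).mono' hsm.aestronglyMeasurable
    (Filter.Eventually.of_forall fun x => ?_)
  calc ‖∫ w, σ (⟪((w : Pd d)).1, x⟫ + ((w : Pd d)).2) ∂Q‖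
      ≤ ∫ w, ‖σ (⟪((w : Pd d)).1, x⟫ + ((w : Pd d)).2)‖ ∂Q :=
        norm_integral_le_integral_norm _
    _ ≤ ∫ _w, g x ∂Q := by
        refine integral_mono (hQint x).norm (integrable_const _) fun w => ?_
        rw [Real.norm_eq_abs]; exact hbound w x
    _ = m * g x := by simp [hm, smul_eq_mul, Measure.real]

/-- If ‖r‖_{L²(ρ)} ≤ t‖f‖_{L²(ρ)}, J(μ) = ∫ L_ρ r dμ (Fenchel equality) and
‖Kμ − f‖_{L²(ρ)} ≤ ‖f‖_{L²(ρ)}, then ‖μ‖_{M(Ω)} ≤ J(μ) ≤ 2t‖f‖²_{L²(ρ)}. -/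
theorem regularity_norm_bound
    {d : ℕ} (Ω : Set (Pd d)) (hΩ : IsCompact Ω)
    (ρ : Measure (Ed d)) [IsProbabilityMeasure ρ]
    (hρ2 : Integrable (fun x : Ed d => ‖x‖ ^ 2) ρ)
    (σ : ℝ → ℝ) (Lσ : NNReal) (hσ : LipschitzWith Lσ σ)
    (f : Ed d → ℝ) (hfm : Measurable f) (hf2 : MemLp f 2 ρ)
    (t : ℝ) (ht : 0 ≤ t)
    (r : Ed d → ℝ) (hrm : Measurable r) (hr2 : MemLp r 2 ρ)
    (hrb : L2norm ρ r ≤ t * L2norm ρ f)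
    (μ : SignedMeasure ↥Ω)
    (hFenchel : Jfun μ = sInt μ (fun w => Lop σ ρ r (w : Pd d)))
    (hres : L2norm ρ (fun x => Kop σ μ x - f x) ≤ L2norm ρ f) :
    tvNorm μ ≤ Jfun μ ∧ Jfun μ ≤ 2 * t * L2norm ρ f ^ 2 := by
  constructor
  · -- tvNorm ≤ Jfun
    haveI : IsFiniteMeasure μ.totalVariation := by
      unfold SignedMeasure.totalVariation; infer_instance
    obtain ⟨C0, hC0⟩ := (Bornology.IsBounded.exists_norm_le hΩ.isBounded)
    set C : ℝ := max C0 0 with hCdef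
    have hVnonneg : ∀ w : Pd d, 0 ≤ Vw w := fun w => by unfold Vw; positivity
    have hVint : Integrable (fun w : ↥Ω => Vw (w : Pd d)) μ.totalVariation := by
      refine (integrable_const (1 + 2 * C)).mono' ?_ ?_
      · have : Continuous fun w : ↥Ω => Vw (w : Pd d) := by
          unfold Vw
          exact (continuous_const.add
            (continuous_subtype_val.fst.norm)).add (continuous_subtype_val.snd.abs)
        exact this.aestronglyMeasurable
      · refine Filter.Eventually.of_forall fun w => ?_
        have h1 : ‖(w : Pd d)‖ ≤ C := (hC0 _ w.2).trans (le_max_left _ _)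
        have h2 : ‖((w : Pd d)).1‖ ≤ C := (norm_fst_le (w : Pd d)).trans h1
        have h3 : |((w : Pd d)).2| ≤ C := by
          have := (norm_snd_le (w : Pd d)).trans h1
          simpa [Real.norm_eq_abs] using this
        rw [Real.norm_eq_abs, abs_of_nonneg (hVnonneg _)]
        unfold Vw; linarith
    have h1 : tvNorm μ = ∫ _w, (1:ℝ) ∂μ.totalVariation := by
      rw [tvNorm]; simp [Measure.real]
    rw [Jfun, h1]
    refine integral_mono (integrable_const 1) hVint fun w => ?_
    have := norm_nonneg ((w : Pd d)).1
    have := abs_nonneg ((w : Pd d)).2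
    unfold Vw; linarith
  · -- Jfun ≤ 2 t ‖f‖²
    obtain ⟨eqP, intP⟩ := fubini_aux hΩ ρ hρ2 σ Lσ hσ r hrm hr2 μ.toJordanDecomposition.posPart
    obtain ⟨eqN, intN⟩ := fubini_aux hΩ ρ hρ2 σ Lσ hσ r hrm hr2 μ.toJordanDecomposition.negPart
    have hKdef : ∀ x, Kop σ μ x
        = (∫ w, σ (⟪((w : Pd d)).1, x⟫ + ((w : Pd d)).2) ∂μ.toJordanDecomposition.posPart)
          - ∫ w, σ (⟪((w : Pd d)).1, x⟫ + ((w : Pd d)).2) ∂μ.toJordanDecomposition.negPart :=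
      fun x => rfl
    have hJ : Jfun μ = ∫ x, r x * Kop σ μ x ∂ρ := by
      rw [hFenchel, sInt, eqP, eqN, ← integral_sub intP intN]
      refine integral_congr_ae (Filter.Eventually.of_forall fun x => ?_)
      simp only [hKdef]; ring
    have hK2 : MemLp (Kop σ μ) 2 ρ := by
      have := (memℒp_kernel_int hΩ ρ hρ2 σ Lσ hσ μ.toJordanDecomposition.posPart).sub
        (memℒp_kernel_int hΩ ρ hρ2 σ Lσ hσ μ.toJordanDecomposition.negPart)
      exact this
    have hKf : MemLp (fun x => Kop σ μ x - f x) 2 ρ := hK2.sub hf2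
    have hKb : L2norm ρ (Kop σ μ) ≤ 2 * L2norm ρ f := by
      have he : L2norm ρ (Kop σ μ) = L2norm ρ (fun x => (Kop σ μ x - f x) + f x) := by
        congr 1; funext x; ring
      rw [he]
      calc L2norm ρ (fun x => (Kop σ μ x - f x) + f x)
          ≤ L2norm ρ (fun x => Kop σ μ x - f x) + L2norm ρ f := L2norm_add_le hKf hf2
        _ ≤ L2norm ρ f + L2norm ρ f := add_le_add_left hres _
        _ = 2 * L2norm ρ f := by ring
    have hfin : Jfun μ ≤ L2norm ρ r * L2norm ρ (Kop σ μ) := by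
      rw [hJ]; exact (le_abs_self _).trans (abs_integral_mul_le hr2 hK2)
    have h2 : L2norm ρ r * L2norm ρ (Kop σ μ) ≤ (t * L2norm ρ f) * (2 * L2norm ρ f) :=
      mul_le_mul hrb hKb (Real.sqrt_nonneg _) (mul_nonneg ht (Real.sqrt_nonneg _))
    calc Jfun μ ≤ (t * L2norm ρ f) * (2 * L2norm ρ f) := hfin.trans h2
      _ = 2 * t * L2norm ρ f ^ 2 := by ring


end
end

section
/- Suppose μ† ∈ M(Ω) satisfies the orthogonality condition L_ρ(f − Kμ†) = 0 on Ω. Then for every μ ∈ M(Ω): ∫_Ω L_ρ(f − Kμ) d(μ − μ†) = −‖Kμ† − Kμ‖²_{L²(ρ)}; in particular this quantity is strictly negative whenever ‖Kμ† − Kμ‖_{L²(ρ)} > 0, and whenever ‖f − Kμ‖_{L²(ρ)} > ‖f − Kμ†‖_{L²(ρ)}. -/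
open MeasureTheory RealInnerProductSpace

noncomputable section

lemma measure_key {α : Type*} [MeasurableSpace α] (μ ν : SignedMeasure α) :
    (μ - ν).toJordanDecomposition.posPart +
        (μ.toJordanDecomposition.negPart + ν.toJordanDecomposition.posPart) =
      (μ - ν).toJordanDecomposition.negPart +
        (μ.toJordanDecomposition.posPart + ν.toJordanDecomposition.negPart) := by
  rw [← Measure.toSignedMeasure_eq_toSignedMeasure_iff]
  have h1 := (μ - ν).toSignedMeasure_toJordanDecomposition
  have h2 := μ.toSignedMeasure_toJordanDecomposition
  have h3 := ν.toSignedMeasure_toJordanDecomposition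
  simp only [JordanDecomposition.toSignedMeasure] at h1 h2 h3
  rw [Measure.toSignedMeasure_add, Measure.toSignedMeasure_add, Measure.toSignedMeasure_add,
    Measure.toSignedMeasure_add]
  have e : (μ - ν).toJordanDecomposition.posPart.toSignedMeasure =
      ((μ.toJordanDecomposition.posPart.toSignedMeasure -
          μ.toJordanDecomposition.negPart.toSignedMeasure) -
        (ν.toJordanDecomposition.posPart.toSignedMeasure -
          ν.toJordanDecomposition.negPart.toSignedMeasure)) +
        (μ - ν).toJordanDecomposition.negPart.toSignedMeasure := by
    rw [h2, h3]
    rw [sub_eq_iff_eq_add] at h1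
    exact h1
  rw [e]; abel

lemma sInt_sub_of_forall {α : Type*} [MeasurableSpace α] (μ ν : SignedMeasure α) (g : α → ℝ)
    (hg : ∀ (m : Measure α), IsFiniteMeasure m → Integrable g m) :
    sInt (μ - ν) g = sInt μ g - sInt ν g := by
  have key := measure_key μ ν
  have h := congrArg (fun m : Measure α => ∫ w, g w ∂m) key
  rw [integral_add_measure, integral_add_measure, integral_add_measure,
    integral_add_measure] at h
  · simp only [sInt]; linarith
  all_goals exact hg _ inferInstance

/-- If μ† satisfies the orthogonality condition L_ρ(f − Kμ†) = 0 on Ω, then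
for every μ, ∫_Ω L_ρ(f − Kμ) d(μ − μ†) = −‖Kμ† − Kμ‖²_{L²(ρ)}; in particular it is
strictly negative when ‖Kμ† − Kμ‖ > 0 and when ‖f − Kμ‖ > ‖f − Kμ†‖. -/
theorem bregman_strict_descent
    {d : ℕ} (Ω : Set (Pd d)) (hΩ : IsCompact Ω)
    (ρ : Measure (Ed d)) [IsProbabilityMeasure ρ]
    (hρ2 : Integrable (fun x : Ed d => ‖x‖ ^ 2) ρ)
    (σ : ℝ → ℝ) (Lσ : NNReal) (hσ : LipschitzWith Lσ σ)
    (f : Ed d → ℝ) (hfm : Measurable f) (hf2 : MemLp f 2 ρ)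
    (μdag : SignedMeasure ↥Ω)
    (horth : ∀ w ∈ Ω, Lop σ ρ (fun x => f x - Kop σ μdag x) w = 0) :
    ∀ μ : SignedMeasure ↥Ω,
      sInt (μ - μdag) (fun w => Lop σ ρ (fun x => f x - Kop σ μ x) (w : Pd d)) =
          -L2sq ρ (fun x => Kop σ μdag x - Kop σ μ x) ∧
        (0 < L2norm ρ (fun x => Kop σ μdag x - Kop σ μ x) →
          sInt (μ - μdag) (fun w => Lop σ ρ (fun x => f x - Kop σ μ x) (w : Pd d)) < 0) ∧
        (L2norm ρ (fun x => f x - Kop σ μdag x) < L2norm ρ (fun x => f x - Kop σ μ x) →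
          sInt (μ - μdag) (fun w => Lop σ ρ (fun x => f x - Kop σ μ x) (w : Pd d)) < 0) := by
  intro μ
  -- boundedness of Ω
  obtain ⟨r, hr0, hr⟩ : ∃ r : ℝ, 0 ≤ r ∧ ∀ w : ↥Ω, ‖(w : Pd d)‖ ≤ r := by
    obtain ⟨r, hr⟩ := hΩ.isBounded.subset_closedBall 0
    refine ⟨max r 0, le_max_right _ _, fun w => ?_⟩
    have := hr w.2
    rw [Metric.mem_closedBall, dist_zero_right] at this
    exact this.trans (le_max_left _ _)
  set C : ℝ := |σ 0| + (Lσ : ℝ) * r with hC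
  have hC0 : 0 ≤ C := add_nonneg (abs_nonneg _) (mul_nonneg Lσ.2 hr0)
  -- pointwise bound
  have hσbound : ∀ (w : ↥Ω) (x : Ed d),
      |σ (⟪(w : Pd d).1, x⟫ + (w : Pd d).2)| ≤ C * (1 + ‖x‖) := by
    intro w x
    set t : ℝ := ⟪(w : Pd d).1, x⟫ + (w : Pd d).2 with ht
    have h1 : |σ t - σ 0| ≤ (Lσ : ℝ) * |t| := by
      have := hσ.dist_le_mul t 0
      simpa [Real.dist_eq] using this
    have h2 : |σ t| ≤ |σ 0| + (Lσ : ℝ) * |t| := by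
      have := abs_sub_abs_le_abs_sub (σ t) (σ 0)
      linarith
    have h3 : |t| ≤ r * ‖x‖ + r := by
      have ha : |⟪(w : Pd d).1, x⟫| ≤ ‖(w : Pd d).1‖ * ‖x‖ := abs_real_inner_le_norm _ _
      have hb : ‖(w : Pd d).1‖ ≤ r := (norm_fst_le (w : Pd d)).trans (hr w)
      have hc : |(w : Pd d).2| ≤ r := by
        have := (norm_snd_le (w : Pd d)).trans (hr w)
        simpa using this
      have := abs_add_le ⟪(w : Pd d).1, x⟫ (w : Pd d).2
      have hx0 : (0:ℝ) ≤ ‖x‖ := norm_nonneg _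
      nlinarith [abs_nonneg ⟪(w : Pd d).1, x⟫]
    have hx0 : (0:ℝ) ≤ ‖x‖ := norm_nonneg _
    have hσ00 : (0:ℝ) ≤ |σ 0| := abs_nonneg _
    have hL0 : (0:ℝ) ≤ (Lσ : ℝ) := Lσ.2
    nlinarith
  -- MemLp of the majorant
  have hn2 : MemLp (fun x : Ed d => ‖x‖) 2 ρ := by
    refine (memLp_two_iff_integrable_sq (μ := ρ) measurable_norm.aestronglyMeasurable).mpr ?_
    simpa using hρ2
  have hV2 : MemLp (fun x : Ed d => C * (1 + ‖x‖)) 2 ρ :=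
    ((memLp_const (μ := ρ) (1:ℝ)).add hn2).const_mul C
  -- joint continuity
  have hgc : Continuous (fun p : ↥Ω × Ed d => σ (⟪(p.1 : Pd d).1, p.2⟫ + (p.1 : Pd d).2)) := by
    apply hσ.continuous.comp
    exact ((Continuous.inner (continuous_subtype_val.comp continuous_fst).fst continuous_snd).add
      (continuous_subtype_val.comp continuous_fst).snd)
  have hgc' : Continuous (fun p : Ed d × ↥Ω => σ (⟪(p.2 : Pd d).1, p.1⟫ + (p.2 : Pd d).2)) := by
    apply hσ.continuous.comp
    exact ((Continuous.inner (continuous_subtype_val.comp continuous_snd).fst continuous_fst).add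
      (continuous_subtype_val.comp continuous_snd).snd)
  -- integrability of the slice in w, for every finite measure on Ω and every x
  have hslice : ∀ (x : Ed d) (m : Measure ↥Ω), IsFiniteMeasure m →
      Integrable (fun w : ↥Ω => σ (⟪(w : Pd d).1, x⟫ + (w : Pd d).2)) m := by
    intro x m hm
    refine Integrable.mono' (integrable_const (C * (1 + ‖x‖))) ?_ ?_
    · exact (hgc.comp (Continuous.prodMk_left x)).aestronglyMeasurable
    · exact Filter.Eventually.of_forall fun w => by
        simpa [Real.norm_eq_abs] using hσbound w x
  -- measurability and MemLp of x ↦ ∫ σ dm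
  have hI2 : ∀ (m : Measure ↥Ω), IsFiniteMeasure m →
      MemLp (fun x : Ed d => ∫ w, σ (⟪(w : Pd d).1, x⟫ + (w : Pd d).2) ∂m) 2 ρ := by
    intro m hm
    have hmeas : StronglyMeasurable
        (fun x : Ed d => ∫ w, σ (⟪(w : Pd d).1, x⟫ + (w : Pd d).2) ∂m) := by
      apply MeasureTheory.StronglyMeasurable.integral_prod_right
        (f := fun (x : Ed d) (w : ↥Ω) => σ (⟪(w : Pd d).1, x⟫ + (w : Pd d).2))
      exact hgc'.stronglyMeasurable
    have hbd : ∀ x : Ed d, ‖∫ w, σ (⟪(w : Pd d).1, x⟫ + (w : Pd d).2) ∂m‖ ≤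
        ‖(m Set.univ).toReal * (C * (1 + ‖x‖))‖ := by
      intro x
      have h1 : ‖∫ w, σ (⟪(w : Pd d).1, x⟫ + (w : Pd d).2) ∂m‖ ≤
          (C * (1 + ‖x‖)) * (m Set.univ).toReal := by
        apply norm_integral_le_of_norm_le_const
        exact Filter.Eventually.of_forall fun w => by
          simpa [Real.norm_eq_abs] using hσbound w x
      have h2 : (0:ℝ) ≤ (m Set.univ).toReal * (C * (1 + ‖x‖)) := by
        have : (0:ℝ) ≤ C * (1 + ‖x‖) := by positivity
        positivity
      rw [Real.norm_eq_abs, Real.norm_eq_abs, abs_of_nonneg h2, mul_comm]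
      rw [Real.norm_eq_abs] at h1
      exact h1
    exact MemLp.of_le (hV2.const_mul (m Set.univ).toReal) hmeas.aestronglyMeasurable
      (Filter.Eventually.of_forall hbd)
  -- MemLp of Kop
  have hK2 : ∀ ν : SignedMeasure ↥Ω, MemLp (fun x => Kop σ ν x) 2 ρ := by
    intro ν
    have := (hI2 _ (by infer_instance : IsFiniteMeasure ν.toJordanDecomposition.posPart)).sub
      (hI2 _ (by infer_instance : IsFiniteMeasure ν.toJordanDecomposition.negPart))
    exact this
  -- products of two L² functions are integrable
  have hmul : ∀ (g h : Ed d → ℝ), MemLp g 2 ρ → MemLp h 2 ρ →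
      Integrable (fun x => g x * h x) ρ := by
    intro g h hg hh
    have hpqr : (1 : ENNReal) / 1 = 1 / 2 + 1 / 2 := by
      rw [ENNReal.add_halves, one_div_one]
    have := (hh.smul hg (hpqr := ⟨by simpa only [one_div] using hpqr.symm⟩) : MemLp (g • h) 1 ρ)
    rw [memLp_one_iff_integrable] at this
    simpa [Pi.smul_apply', smul_eq_mul, Pi.mul_def] using this
  -- the Fubini swap for finite measures
  have hswap : ∀ (m : Measure ↥Ω), IsFiniteMeasure m → ∀ (φ : Ed d → ℝ), MemLp φ 2 ρ →
      ∫ w, Lop σ ρ φ (w : Pd d) ∂m =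
        ∫ x, φ x * (∫ w, σ (⟪(w : Pd d).1, x⟫ + (w : Pd d).2) ∂m) ∂ρ := by
    intro m hm φ hφ
    have hint : Integrable
        (Function.uncurry fun (w : ↥Ω) (x : Ed d) => φ x * σ (⟪(w : Pd d).1, x⟫ + (w : Pd d).2))
        (m.prod ρ) := by
      refine Integrable.mono'
        (g := fun p : ↥Ω × Ed d => (1:ℝ) * (‖φ p.2‖ * (C * (1 + ‖p.2‖)))) ?_ ?_ ?_
      · exact Integrable.mul_prod (integrable_const (μ := m) (1:ℝ)) (hmul _ _ hφ.norm hV2)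
      · exact (hφ.1.comp_snd.mul hgc.aestronglyMeasurable)
      · refine Filter.Eventually.of_forall fun p => ?_
        simp only [Function.uncurry, one_mul, Real.norm_eq_abs, abs_mul]
        exact mul_le_mul_of_nonneg_left (hσbound p.1 p.2) (abs_nonneg _)
    have hs := MeasureTheory.integral_integral_swap hint
    simp only [Lop]
    rw [hs]
    simp_rw [integral_const_mul]
  -- the swap for signed measures
  have hswapS : ∀ (τ : SignedMeasure ↥Ω) (φ : Ed d → ℝ), MemLp φ 2 ρ →
      sInt τ (fun w => Lop σ ρ φ (w : Pd d)) = ∫ x, φ x * Kop σ τ x ∂ρ := by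
    intro τ φ hφ
    rw [sInt, hswap _ inferInstance φ hφ, hswap _ inferInstance φ hφ,
      ← integral_sub (hmul _ _ hφ (hI2 _ inferInstance)) (hmul _ _ hφ (hI2 _ inferInstance))]
    exact integral_congr_ae (Filter.Eventually.of_forall fun x => by
      simp only [Kop, sInt, mul_sub])
  -- basic MemLp of residuals
  have hφμ : MemLp (fun x => f x - Kop σ μ x) 2 ρ := hf2.sub (hK2 μ)
  have hφd : MemLp (fun x => f x - Kop σ μdag x) 2 ρ := hf2.sub (hK2 μdag)
  set τ : SignedMeasure ↥Ω := μ - μdag with hτ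
  have e1 : sInt τ (fun w => Lop σ ρ (fun x => f x - Kop σ μ x) (w : Pd d)) =
      ∫ x, (f x - Kop σ μ x) * Kop σ τ x ∂ρ := hswapS τ _ hφμ
  have e0 : (0:ℝ) = ∫ x, (f x - Kop σ μdag x) * Kop σ τ x ∂ρ := by
    rw [← hswapS τ _ hφd]
    have hz : (fun w : ↥Ω => Lop σ ρ (fun x => f x - Kop σ μdag x) (w : Pd d)) =
        fun _ => (0:ℝ) := funext fun w => horth _ w.2
    rw [hz]
    simp [sInt]
  have eK : ∀ x, Kop σ τ x = Kop σ μ x - Kop σ μdag x := by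
    intro x
    exact sInt_sub_of_forall μ μdag _ (fun m hm => hslice x m hm)
  -- main identity
  have main : sInt τ (fun w => Lop σ ρ (fun x => f x - Kop σ μ x) (w : Pd d)) =
      -L2sq ρ (fun x => Kop σ μdag x - Kop σ μ x) := by
    have e2 : sInt τ (fun w => Lop σ ρ (fun x => f x - Kop σ μ x) (w : Pd d)) =
        ∫ x, ((f x - Kop σ μ x) - (f x - Kop σ μdag x)) * Kop σ τ x ∂ρ := by
      rw [e1]
      have h := integral_sub (hmul _ _ hφμ (hK2 τ)) (hmul _ _ hφd (hK2 τ))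
      calc ∫ x, (f x - Kop σ μ x) * Kop σ τ x ∂ρ
          = (∫ x, (f x - Kop σ μ x) * Kop σ τ x ∂ρ) -
              ∫ x, (f x - Kop σ μdag x) * Kop σ τ x ∂ρ := by rw [← e0, sub_zero]
        _ = ∫ x, ((f x - Kop σ μ x) * Kop σ τ x - (f x - Kop σ μdag x) * Kop σ τ x) ∂ρ := h.symm
        _ = ∫ x, ((f x - Kop σ μ x) - (f x - Kop σ μdag x)) * Kop σ τ x ∂ρ :=
            integral_congr_ae (Filter.Eventually.of_forall fun x => by ring)
    rw [e2, L2sq, ← integral_neg]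
    exact integral_congr_ae (Filter.Eventually.of_forall fun x => by simp only [eK]; ring)
  refine ⟨main, fun hpos => ?_, fun hlt => ?_⟩
  · rw [main]
    have := Real.sqrt_pos.mp hpos
    linarith
  · rw [main]
    -- Pythagoras
    have hcross : ∫ x, (f x - Kop σ μdag x) * (Kop σ μdag x - Kop σ μ x) ∂ρ = 0 := by
      have h1 : ∫ x, (f x - Kop σ μdag x) * (Kop σ μdag x - Kop σ μ x) ∂ρ =
          -∫ x, (f x - Kop σ μdag x) * Kop σ τ x ∂ρ := by
        rw [← integral_neg]
        exact integral_congr_ae (Filter.Eventually.of_forall fun x => by simp only [eK]; ring)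
      rw [h1, ← e0, neg_zero]
    have hD2 : MemLp (fun x => Kop σ μdag x - Kop σ μ x) 2 ρ := (hK2 μdag).sub (hK2 μ)
    have pyth : L2sq ρ (fun x => f x - Kop σ μ x) =
        L2sq ρ (fun x => f x - Kop σ μdag x) +
          L2sq ρ (fun x => Kop σ μdag x - Kop σ μ x) := by
      have hint1 : Integrable (fun x => (f x - Kop σ μdag x) ^ 2) ρ := by
        simpa [sq] using hmul _ _ hφd hφd
      have hint2 : Integrable (fun x => (f x - Kop σ μdag x) * (Kop σ μdag x - Kop σ μ x)) ρ :=
        hmul _ _ hφd hD2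
      have hint3 : Integrable (fun x => (Kop σ μdag x - Kop σ μ x) ^ 2) ρ := by
        simpa [sq] using hmul _ _ hD2 hD2
      have expand : L2sq ρ (fun x => f x - Kop σ μ x) =
          ∫ x, ((f x - Kop σ μdag x) ^ 2 +
            (2 * ((f x - Kop σ μdag x) * (Kop σ μdag x - Kop σ μ x)) +
              (Kop σ μdag x - Kop σ μ x) ^ 2)) ∂ρ := by
        rw [L2sq]
        exact integral_congr_ae (Filter.Eventually.of_forall fun x => by ring)
      have hint2' : Integrable (fun x =>
          2 * ((f x - Kop σ μdag x) * (Kop σ μdag x - Kop σ μ x))) ρ := hint2.const_mul 2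
      have hint23 : Integrable (fun x =>
          2 * ((f x - Kop σ μdag x) * (Kop σ μdag x - Kop σ μ x)) +
            (Kop σ μdag x - Kop σ μ x) ^ 2) ρ := hint2'.add hint3
      rw [expand, integral_add hint1 hint23, integral_add hint2' hint3, integral_const_mul,
        hcross]
      simp [L2sq]
    have hlt2 : L2sq ρ (fun x => f x - Kop σ μdag x) < L2sq ρ (fun x => f x - Kop σ μ x) := by
      by_contra hcon
      push_neg at hcon
      exact absurd (Real.sqrt_le_sqrt hcon) (not_le.mpr hlt)
    linarith

end
end

section
/- Let μ† ∈ M(Ω) minimize R_f with J(μ†) < ∞. Let μ : [0,∞) → M(Ω) and p : [0,∞) → C(Ω) with μ_0 = 0 and p_0 = 0, and assume: (i) t ↦ R_f(μ_t) is nonincreasing; (ii) p_t ∈ ∂J(μ_t) for all t (so that D_J^{p_t}(μ†,μ_t) ≥ 0); (iii) for all 0 ≤ s < t, D_J^{p_t}(μ†,μ_t) − D_J^{p_s}(μ†,μ_s) ≤ ∫_s^t (R_f(μ†) − R_f(μ_τ)) dτ. Then R_f(μ_t) ≤ R_f(μ†) + J(μ†)/t for every t > 0. -/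
open MeasureTheory RealInnerProductSpace

noncomputable section

/-- If μ† minimizes R_f with J(μ†) < ∞, μ_0 = 0, p_0 = 0, t ↦ R_f(μ_t) is
nonincreasing, p_t ∈ ∂J(μ_t) for all t ≥ 0, and the Bregman distance satisfies
D_J^{p_t}(μ†,μ_t) − D_J^{p_s}(μ†,μ_s) ≤ ∫_s^t (R_f(μ†) − R_f(μ_τ)) dτ, then
R_f(μ_t) ≤ R_f(μ†) + J(μ†)/t for every t > 0. -/
theorem ideal_loss_rate
    {d : ℕ} (Ω : Set (Pd d)) (hΩ : IsCompact Ω)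
    (ρ : Measure (Ed d)) [IsProbabilityMeasure ρ]
    (hρ2 : Integrable (fun x : Ed d => ‖x‖ ^ 2) ρ)
    (σ : ℝ → ℝ) (Lσ : NNReal) (hσ : LipschitzWith Lσ σ)
    (f : Ed d → ℝ) (hfm : Measurable f) (hf2 : MemLp f 2 ρ)
    (μdag : SignedMeasure ↥Ω)
    (hmin : ∀ μ' : SignedMeasure ↥Ω, Rf σ ρ f μdag ≤ Rf σ ρ f μ')
    (hJfin : Integrable (fun w : ↥Ω => Vw (w : Pd d)) μdag.totalVariation)
    (μ : ℝ → SignedMeasure ↥Ω) (p : ℝ → Pd d → ℝ)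
    (hμ0 : μ 0 = 0) (hp0 : ∀ w : Pd d, p 0 w = 0)
    (hRdec : ∀ s t : ℝ, 0 ≤ s → s ≤ t → Rf σ ρ f (μ t) ≤ Rf σ ρ f (μ s))
    (hsub : ∀ t : ℝ, 0 ≤ t → ∀ lam : SignedMeasure ↥Ω,
      Jfun (μ t) + sInt (lam - μ t) (fun w => p t (w : Pd d)) ≤ Jfun lam)
    (hD : ∀ s t : ℝ, 0 ≤ s → s < t →
      DJ (p t) μdag (μ t) - DJ (p s) μdag (μ s) ≤
        ∫ τ in s..t, (Rf σ ρ f μdag - Rf σ ρ f (μ τ))) :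
    ∀ t : ℝ, 0 < t → Rf σ ρ f (μ t) ≤ Rf σ ρ f μdag + Jfun μdag / t := by
  intro t ht
  have h0t : (0:ℝ) ≤ t := ht.le
  -- D(t) ≥ 0
  have hD0 : 0 ≤ DJ (p t) μdag (μ t) := by
    have h := hsub t h0t μdag
    unfold DJ
    linarith
  -- D(0) = J(μ†)
  have hDJ0 : DJ (p 0) μdag (μ 0) = Jfun μdag := by
    unfold DJ
    rw [hμ0]
    have h1 : Jfun (0 : SignedMeasure ↥Ω) = 0 := by
      simp [Jfun, MeasureTheory.SignedMeasure.totalVariation_zero]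
    have h2 : sInt (μdag - (0 : SignedMeasure ↥Ω)) (fun w => p 0 (w : Pd d)) = 0 := by
      simp [sInt, hp0]
    rw [h1, h2]
    ring
  -- antitone, hence interval integrable
  have hint : IntervalIntegrable (fun τ => Rf σ ρ f (μ τ)) MeasureTheory.volume 0 t := by
    apply AntitoneOn.intervalIntegrable
    rw [Set.uIcc_of_le h0t]
    intro a ha b hb hab
    exact hRdec a b ha.1 hab
  have hmono : (∫ τ in (0:ℝ)..t, (Rf σ ρ f μdag - Rf σ ρ f (μ τ))) ≤
      ∫ τ in (0:ℝ)..t, (Rf σ ρ f μdag - Rf σ ρ f (μ t)) := by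
    apply intervalIntegral.integral_mono_on h0t
      (IntervalIntegrable.sub intervalIntegrable_const hint) intervalIntegrable_const
    intro τ hτ
    have := hRdec τ t hτ.1 hτ.2
    linarith
  have hconst : (∫ τ in (0:ℝ)..t, (Rf σ ρ f μdag - Rf σ ρ f (μ t))) =
      t * (Rf σ ρ f μdag - Rf σ ρ f (μ t)) := by
    simp [intervalIntegral.integral_const]
    ring
  have hkey := hD 0 t le_rfl ht
  rw [hDJ0] at hkey
  have hfin : t * (Rf σ ρ f (μ t) - Rf σ ρ f μdag) ≤ Jfun μdag := by
    nlinarith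
  have : Rf σ ρ f (μ t) - Rf σ ρ f μdag ≤ Jfun μdag / t := by
    rw [le_div_iff₀ ht]
    nlinarith
  linarith

end
end

section
/- Let δ > 0 and f^δ ∈ L²(ρ) with ‖f^δ − f‖_{L²(ρ)} ≤ δ, and let μ† ∈ M(Ω) satisfy the orthogonality condition L_ρ(f − Kμ†) = 0 on Ω. Then for every ν ∈ M(Ω): ∫_Ω L_ρ(f^δ − Kν) d(ν − μ†) ≤ δ²/4. -/
open MeasureTheory RealInnerProductSpace

noncomputable section

/-! ### Auxiliary lemmas -/

section Aux

variable {d : ℕ} {Ω : Set (Pd d)} {σ : ℝ → ℝ} {Lσ : NNReal}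

/-- Joint continuity of the feature map. -/
lemma Sf_cont (hσ : LipschitzWith Lσ σ) :
    Continuous (fun p : ↥Ω × Ed d => σ (⟪(p.1 : Pd d).1, p.2⟫ + (p.1 : Pd d).2)) := by
  apply hσ.continuous.comp
  have h1 : Continuous fun p : ↥Ω × Ed d => (p.1 : Pd d) :=
    continuous_subtype_val.comp continuous_fst
  exact (h1.fst.inner continuous_snd).add h1.snd

/-- Uniform bound on the feature map over a compact parameter set. -/
lemma Sf_bound (hΩ : IsCompact Ω) (hσ : LipschitzWith Lσ σ) :
    ∃ B : ℝ, 0 ≤ B ∧ ∀ (w : ↥Ω) (x : Ed d),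
      |σ (⟪(w : Pd d).1, x⟫ + (w : Pd d).2)| ≤ B * (1 + ‖x‖) := by
  obtain ⟨C, hC0, hC⟩ := hΩ.isBounded.exists_pos_norm_le
  refine ⟨|σ 0| + (Lσ : ℝ) * C, by positivity, fun w x => ?_⟩
  set t : ℝ := ⟪(w : Pd d).1, x⟫ + (w : Pd d).2 with ht
  have h1 : |σ t - σ 0| ≤ (Lσ : ℝ) * |t| := by
    simpa [Real.dist_eq] using hσ.dist_le_mul t 0
  have ha : ‖(w : Pd d).1‖ ≤ C := le_trans (norm_fst_le _) (hC _ w.2)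
  have hb : |(w : Pd d).2| ≤ C := by
    have := le_trans (norm_snd_le (w : Pd d)) (hC _ w.2)
    simpa [Real.norm_eq_abs] using this
  have h2 : |t| ≤ C * (1 + ‖x‖) := by
    calc |t| ≤ |⟪(w : Pd d).1, x⟫| + |(w : Pd d).2| := abs_add_le _ _
      _ ≤ ‖(w : Pd d).1‖ * ‖x‖ + C := add_le_add (abs_real_inner_le_norm _ _) hb
      _ ≤ C * ‖x‖ + C :=
          add_le_add_left (mul_le_mul_of_nonneg_right ha (norm_nonneg x)) C
      _ = C * (1 + ‖x‖) := by ring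
  have h3 : |σ t| ≤ |σ 0| + (Lσ : ℝ) * |t| := by
    calc |σ t| ≤ |σ 0| + |σ t - σ 0| := by
          have := abs_add_le (σ 0) (σ t - σ 0)
          simpa using this
      _ ≤ |σ 0| + (Lσ : ℝ) * |t| := by linarith
  have hx : (0 : ℝ) ≤ ‖x‖ := norm_nonneg x
  have hL : (0 : ℝ) ≤ (Lσ : ℝ) := Lσ.coe_nonneg
  have hs0 : (0 : ℝ) ≤ |σ 0| := abs_nonneg _
  nlinarith [mul_le_mul_of_nonneg_left h2 hL]

variable (σ) in
/-- Integrability of the feature map in the parameter, for a finite measure. -/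
lemma Sf_integrable (hΩ : IsCompact Ω) (hσ : LipschitzWith Lσ σ)
    (μ : Measure ↥Ω) [IsFiniteMeasure μ] (x : Ed d) :
    Integrable (fun w : ↥Ω => σ (⟪(w : Pd d).1, x⟫ + (w : Pd d).2)) μ := by
  obtain ⟨B, hB0, hB⟩ := Sf_bound hΩ hσ
  have hcont : Continuous (fun w : ↥Ω => σ (⟪(w : Pd d).1, x⟫ + (w : Pd d).2)) :=
    (Sf_cont hσ).comp (continuous_id.prodMk continuous_const)
  refine ⟨hcont.aestronglyMeasurable, HasFiniteIntegral.of_bounded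
    (C := B * (1 + ‖x‖)) (ae_of_all _ fun w => ?_)⟩
  simpa [Real.norm_eq_abs] using hB w x

variable (σ Ω) in
/-- Strong measurability of x ↦ ∫ σ(⟪a,x⟫+b) dμ. -/
lemma intS_sm (hσ : LipschitzWith Lσ σ) (μ : Measure ↥Ω) [IsFiniteMeasure μ] :
    StronglyMeasurable (fun x : Ed d =>
      ∫ w : ↥Ω, σ (⟪(w : Pd d).1, x⟫ + (w : Pd d).2) ∂μ) :=
  StronglyMeasurable.integral_prod_left
    (f := fun (w : ↥Ω) (x : Ed d) => σ (⟪(w : Pd d).1, x⟫ + (w : Pd d).2))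
    ((Sf_cont hσ).stronglyMeasurable)

variable (σ) in
/-- Product of two L² functions is integrable. -/
lemma mulL2 {α : Type*} [MeasurableSpace α] {ρ : Measure α} {u v : α → ℝ}
    (hu : MemLp u 2 ρ) (hv : MemLp v 2 ρ) :
    Integrable (fun x => u x * v x) ρ := by
  have h : MemLp (v • u) 1 ρ := by
    exact hu.smul hv
  have h2 : Integrable (v • u) ρ := memLp_one_iff_integrable.mp h
  have h3 : Integrable (fun x => v x * u x) ρ := h2
  simpa [mul_comm] using h3

variable {ρ : Measure (Ed d)}

/-- The weight function 1 + ‖x‖ is in L². -/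
lemma memV2 [IsProbabilityMeasure ρ] (hρ2 : Integrable (fun x : Ed d => ‖x‖ ^ 2) ρ) :
    MemLp (fun x : Ed d => 1 + ‖x‖) 2 ρ := by
  have h : MemLp (fun x : Ed d => ‖x‖) 2 ρ :=
    (memLp_two_iff_integrable_sq measurable_norm.aestronglyMeasurable).2 hρ2
  exact (memLp_const (1 : ℝ)).add h

variable (σ Ω) in
/-- x ↦ ∫ σ(⟪a,x⟫+b) dμ is in L². -/
lemma intS_memL2 [IsProbabilityMeasure ρ] (hΩ : IsCompact Ω) (hσ : LipschitzWith Lσ σ)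
    (hρ2 : Integrable (fun x : Ed d => ‖x‖ ^ 2) ρ)
    (μ : Measure ↥Ω) [IsFiniteMeasure μ] :
    MemLp (fun x : Ed d => ∫ w : ↥Ω, σ (⟪(w : Pd d).1, x⟫ + (w : Pd d).2) ∂μ) 2 ρ := by
  obtain ⟨B, hB0, hB⟩ := Sf_bound hΩ hσ
  refine MemLp.of_le_mul (memV2 hρ2) (intS_sm Ω σ hσ μ).aestronglyMeasurable
    (c := B * (μ Set.univ).toReal) (ae_of_all _ fun x => ?_)
  have h1 : ‖∫ w : ↥Ω, σ (⟪(w : Pd d).1, x⟫ + (w : Pd d).2) ∂μ‖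
      ≤ B * (1 + ‖x‖) * (μ Set.univ).toReal := by
    refine norm_integral_le_of_norm_le_const (ae_of_all _ fun w => ?_)
    simpa [Real.norm_eq_abs] using hB w x
  have h2 : ‖(1 : ℝ) + ‖x‖‖ = 1 + ‖x‖ := by
    rw [Real.norm_eq_abs, abs_of_nonneg]
    positivity
  rw [h2]
  calc ‖∫ w : ↥Ω, σ (⟪(w : Pd d).1, x⟫ + (w : Pd d).2) ∂μ‖
      ≤ B * (1 + ‖x‖) * (μ Set.univ).toReal := h1
    _ = B * (μ Set.univ).toReal * (1 + ‖x‖) := by ring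

variable (σ Ω) in
/-- Kop is measurable. -/
lemma Kop_meas (hσ : LipschitzWith Lσ σ) (ν : SignedMeasure ↥Ω) :
    Measurable (Kop σ ν) := by
  have h1 := (intS_sm Ω σ hσ ν.toJordanDecomposition.posPart).measurable
  have h2 := (intS_sm Ω σ hσ ν.toJordanDecomposition.negPart).measurable
  exact h1.sub h2

variable (σ Ω) in
/-- Kop is in L². -/
lemma Kop_memL2 [IsProbabilityMeasure ρ] (hΩ : IsCompact Ω) (hσ : LipschitzWith Lσ σ)
    (hρ2 : Integrable (fun x : Ed d => ‖x‖ ^ 2) ρ) (ν : SignedMeasure ↥Ω) :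
    MemLp (Kop σ ν) 2 ρ := by
  have h1 := intS_memL2 Ω σ hΩ hσ hρ2 ν.toJordanDecomposition.posPart
  have h2 := intS_memL2 Ω σ hΩ hσ hρ2 ν.toJordanDecomposition.negPart
  exact h1.sub h2

variable (σ Ω) in
/-- Fubini for a finite measure on the parameter space. -/
lemma fubini_lemma [IsProbabilityMeasure ρ] (hΩ : IsCompact Ω) (hσ : LipschitzWith Lσ σ)
    (hρ2 : Integrable (fun x : Ed d => ‖x‖ ^ 2) ρ)
    {φ : Ed d → ℝ} (hφm : Measurable φ) (hφ2 : MemLp φ 2 ρ)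
    (μ : Measure ↥Ω) [IsFiniteMeasure μ] :
    ∫ w : ↥Ω, Lop σ ρ φ (w : Pd d) ∂μ
      = ∫ x, φ x * ∫ w : ↥Ω, σ (⟪(w : Pd d).1, x⟫ + (w : Pd d).2) ∂μ ∂ρ := by
  obtain ⟨B, hB0, hB⟩ := Sf_bound hΩ hσ
  have hdom : Integrable (fun x : Ed d => B * (‖φ x‖ * (1 + ‖x‖))) ρ :=
    (mulL2 hφ2.norm (memV2 hρ2)).const_mul B
  have hprod : Integrable
      (fun p : ↥Ω × Ed d => (1 : ℝ) * (B * (‖φ p.2‖ * (1 + ‖p.2‖)))) (μ.prod ρ) :=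
    (integrable_const (1 : ℝ)).mul_prod hdom
  have hint : Integrable (Function.uncurry fun (w : ↥Ω) (x : Ed d) =>
      φ x * σ (⟪(w : Pd d).1, x⟫ + (w : Pd d).2)) (μ.prod ρ) := by
    refine Integrable.mono' hprod ?_ (ae_of_all _ fun p => ?_)
    · exact ((hφm.comp measurable_snd).aestronglyMeasurable.mul
        (Sf_cont hσ).aestronglyMeasurable)
    · simp only [Function.uncurry, one_mul, norm_mul]
      have hx : (0 : ℝ) ≤ ‖φ p.2‖ := norm_nonneg _
      have h := hB p.1 p.2
      calc ‖φ p.2‖ * ‖σ (⟪(p.1 : Pd d).1, p.2⟫ + (p.1 : Pd d).2)‖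
          ≤ ‖φ p.2‖ * (B * (1 + ‖p.2‖)) := by
            refine mul_le_mul_of_nonneg_left ?_ hx
            simpa [Real.norm_eq_abs] using h
        _ = B * (‖φ p.2‖ * (1 + ‖p.2‖)) := by ring
  have hswap := integral_integral_swap hint
  calc ∫ w : ↥Ω, Lop σ ρ φ (w : Pd d) ∂μ
      = ∫ w : ↥Ω, ∫ x, φ x * σ (⟪(w : Pd d).1, x⟫ + (w : Pd d).2) ∂ρ ∂μ := rfl
    _ = ∫ x, ∫ w : ↥Ω, φ x * σ (⟪(w : Pd d).1, x⟫ + (w : Pd d).2) ∂μ ∂ρ := hswap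
    _ = ∫ x, φ x * ∫ w : ↥Ω, σ (⟪(w : Pd d).1, x⟫ + (w : Pd d).2) ∂μ ∂ρ := by
        simp only [integral_const_mul]

variable (σ Ω) in
/-- Fubini for a signed measure: sInt of Lop equals inner product with Kop. -/
lemma sInt_fubini [IsProbabilityMeasure ρ] (hΩ : IsCompact Ω) (hσ : LipschitzWith Lσ σ)
    (hρ2 : Integrable (fun x : Ed d => ‖x‖ ^ 2) ρ)
    {φ : Ed d → ℝ} (hφm : Measurable φ) (hφ2 : MemLp φ 2 ρ)
    (μ : SignedMeasure ↥Ω) :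
    sInt μ (fun w : ↥Ω => Lop σ ρ φ (w : Pd d)) = ∫ x, φ x * Kop σ μ x ∂ρ := by
  have hpos := fubini_lemma Ω σ hΩ hσ hρ2 hφm hφ2 μ.toJordanDecomposition.posPart
  have hneg := fubini_lemma Ω σ hΩ hσ hρ2 hφm hφ2 μ.toJordanDecomposition.negPart
  have hip : Integrable (fun x => φ x *
      ∫ w : ↥Ω, σ (⟪(w : Pd d).1, x⟫ + (w : Pd d).2) ∂μ.toJordanDecomposition.posPart) ρ :=
    mulL2 hφ2 (intS_memL2 Ω σ hΩ hσ hρ2 _)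
  have hin : Integrable (fun x => φ x *
      ∫ w : ↥Ω, σ (⟪(w : Pd d).1, x⟫ + (w : Pd d).2) ∂μ.toJordanDecomposition.negPart) ρ :=
    mulL2 hφ2 (intS_memL2 Ω σ hΩ hσ hρ2 _)
  rw [sInt, hpos, hneg, ← integral_sub hip hin]
  congr 1
  funext x
  simp only [Kop, sInt]
  ring

variable (σ Ω) in
/-- Kop is additive under subtraction of signed measures. -/
lemma grp_helper {G : Type*} [AddCommGroup G] {p₁ n₁ p₂ n₂ p₃ n₃ : G}
    (h : p₁ - n₁ = (p₂ - n₂) - (p₃ - n₃)) : p₁ + (n₂ + p₃) = n₁ + (p₂ + n₃) := by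
  have h2 : p₁ = (p₂ - n₂) - (p₃ - n₃) + n₁ := by rw [← h]; abel
  rw [h2]; abel

lemma Kop_sub (hΩ : IsCompact Ω) (hσ : LipschitzWith Lσ σ)
    (ν μ' : SignedMeasure ↥Ω) (x : Ed d) :
    Kop σ (ν - μ') x = Kop σ ν x - Kop σ μ' x := by
  have h1 := (ν - μ').toSignedMeasure_toJordanDecomposition
  have h2 := ν.toSignedMeasure_toJordanDecomposition
  have h3 := μ'.toSignedMeasure_toJordanDecomposition
  simp only [JordanDecomposition.toSignedMeasure] at h1 h2 h3
  have key : (ν - μ').toJordanDecomposition.posPart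
        + (ν.toJordanDecomposition.negPart + μ'.toJordanDecomposition.posPart)
      = (ν - μ').toJordanDecomposition.negPart
        + (ν.toJordanDecomposition.posPart + μ'.toJordanDecomposition.negPart) := by
    refine Measure.toSignedMeasure_eq_toSignedMeasure_iff.mp ?_
    rw [Measure.toSignedMeasure_add, Measure.toSignedMeasure_add,
      Measure.toSignedMeasure_add, Measure.toSignedMeasure_add]
    exact grp_helper (by rw [h1, h2, h3])
  have hI : ∀ (m : Measure ↥Ω) [IsFiniteMeasure m],
      Integrable (fun w : ↥Ω => σ (⟪(w : Pd d).1, x⟫ + (w : Pd d).2)) m :=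
    fun m _ => Sf_integrable σ hΩ hσ m x
  have hkey := congrArg (fun m : Measure ↥Ω =>
    ∫ w : ↥Ω, σ (⟪(w : Pd d).1, x⟫ + (w : Pd d).2) ∂m) key
  rw [integral_add_measure (hI _) ((hI _).add_measure (hI _)),
    integral_add_measure (hI _) (hI _),
    integral_add_measure (hI _) ((hI _).add_measure (hI _)),
    integral_add_measure (hI _) (hI _)] at hkey
  simp only [Kop, sInt]
  linarith

end Aux

/-- With measurement noise ‖f^δ − f‖_{L²(ρ)} ≤ δ and μ† satisfying the
orthogonality condition for f, for every ν: ∫_Ω L_ρ(f^δ − Kν) d(ν − μ†) ≤ δ²/4. -/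
theorem noisy_descent_bound
    {d : ℕ} (Ω : Set (Pd d)) (hΩ : IsCompact Ω)
    (ρ : Measure (Ed d)) [IsProbabilityMeasure ρ]
    (hρ2 : Integrable (fun x : Ed d => ‖x‖ ^ 2) ρ)
    (σ : ℝ → ℝ) (Lσ : NNReal) (hσ : LipschitzWith Lσ σ)
    (f : Ed d → ℝ) (hfm : Measurable f) (hf2 : MemLp f 2 ρ)
    (δ : ℝ) (hδ : 0 < δ)
    (fδ : Ed d → ℝ) (hfδm : Measurable fδ) (hfδ2 : MemLp fδ 2 ρ)
    (hnoise : L2norm ρ (fun x => fδ x - f x) ≤ δ)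
    (μdag : SignedMeasure ↥Ω)
    (horth : ∀ w ∈ Ω, Lop σ ρ (fun x => f x - Kop σ μdag x) w = 0) :
    ∀ ν : SignedMeasure ↥Ω,
      sInt (ν - μdag) (fun w => Lop σ ρ (fun x => fδ x - Kop σ ν x) (w : Pd d)) ≤
        δ ^ 2 / 4 := by
  intro ν
  -- key functions
  have hPm : Measurable (Kop σ ν) := Kop_meas Ω σ hσ ν
  have hQm : Measurable (Kop σ μdag) := Kop_meas Ω σ hσ μdag
  have hP2 : MemLp (Kop σ ν) 2 ρ := Kop_memL2 Ω σ hΩ hσ hρ2 ν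
  have hQ2 : MemLp (Kop σ μdag) 2 ρ := Kop_memL2 Ω σ hΩ hσ hρ2 μdag
  set G : Ed d → ℝ := fun x => Kop σ ν x - Kop σ μdag x with hG
  have hG2 : MemLp G 2 ρ := hP2.sub hQ2
  have hKsub : ∀ x, Kop σ (ν - μdag) x = G x := fun x => Kop_sub hΩ hσ ν μdag x
  -- main Fubini identity
  have hmain : sInt (ν - μdag) (fun w => Lop σ ρ (fun x => fδ x - Kop σ ν x) (w : Pd d))
      = ∫ x, (fδ x - Kop σ ν x) * G x ∂ρ := by
    rw [sInt_fubini Ω σ hΩ hσ hρ2 (φ := fun x => fδ x - Kop σ ν x) (hfδm.sub hPm) (hfδ2.sub hP2) (ν - μdag)]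
    exact integral_congr_ae (ae_of_all _ fun x => by simp only [hKsub x])
  -- orthogonality: ∫ (f - Kμ†) G = 0
  have horth0 : ∫ x, (f x - Kop σ μdag x) * G x ∂ρ = 0 := by
    have h1 : sInt (ν - μdag) (fun w : ↥Ω => Lop σ ρ (fun x => f x - Kop σ μdag x) (w : Pd d))
        = ∫ x, (f x - Kop σ μdag x) * G x ∂ρ := by
      rw [sInt_fubini Ω σ hΩ hσ hρ2 (φ := fun x => f x - Kop σ μdag x) (hfm.sub hQm) (hf2.sub hQ2) (ν - μdag)]
      exact integral_congr_ae (ae_of_all _ fun x => by simp only [hKsub x])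
    rw [← h1]
    have h2 : (fun w : ↥Ω => Lop σ ρ (fun x => f x - Kop σ μdag x) (w : Pd d))
        = fun _ => (0 : ℝ) := funext fun w => horth _ w.2
    rw [sInt, h2]
    simp
  -- decompose the integrand
  have hdf2 : MemLp (fun x => fδ x - f x) 2 ρ := hfδ2.sub hf2
  have hi1 : Integrable (fun x => (fδ x - f x) * G x) ρ := mulL2 hdf2 hG2
  have hi2 : Integrable (fun x => (f x - Kop σ μdag x) * G x) ρ := mulL2 (hf2.sub hQ2) hG2
  have hi3 : Integrable (fun x => G x * G x) ρ := mulL2 hG2 hG2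
  have hsplit : ∫ x, (fδ x - Kop σ ν x) * G x ∂ρ
      = (∫ x, (fδ x - f x) * G x ∂ρ) + (∫ x, (f x - Kop σ μdag x) * G x ∂ρ)
        - ∫ x, G x * G x ∂ρ := by
    have e : ∫ x, (fδ x - Kop σ ν x) * G x ∂ρ
        = ∫ x, ((fδ x - f x) * G x + (f x - Kop σ μdag x) * G x - G x * G x) ∂ρ := by
      refine integral_congr_ae (ae_of_all _ fun x => ?_)
      simp only [hG]
      ring
    rw [e, integral_sub (f := fun x => (fδ x - f x) * G x + (f x - Kop σ μdag x) * G x)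
      (g := fun x => G x * G x) (hi1.add hi2) hi3,
      integral_add (f := fun x => (fδ x - f x) * G x)
      (g := fun x => (f x - Kop σ μdag x) * G x) hi1 hi2]
  -- Cauchy-Schwarz
  set s : ℝ := Real.sqrt (∫ x, G x ^ 2 ∂ρ) with hs
  have hs0 : 0 ≤ s := Real.sqrt_nonneg _
  have hG2nonneg : 0 ≤ ∫ x, G x ^ 2 ∂ρ := integral_nonneg fun x => sq_nonneg _
  have hsq : ∫ x, G x * G x ∂ρ = s ^ 2 := by
    rw [hs, Real.sq_sqrt hG2nonneg]
    exact integral_congr_ae (ae_of_all _ fun x => by ring)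
  have hCS : ∫ x, (fδ x - f x) * G x ∂ρ ≤ δ * s := by
    have habs : ∫ x, (fδ x - f x) * G x ∂ρ ≤ ∫ x, ‖fδ x - f x‖ * ‖G x‖ ∂ρ := by
      refine integral_mono hi1 (mulL2 hdf2.norm hG2.norm) fun x => ?_
      calc (fδ x - f x) * G x ≤ |(fδ x - f x) * G x| := le_abs_self _
        _ = ‖fδ x - f x‖ * ‖G x‖ := by rw [abs_mul, Real.norm_eq_abs, Real.norm_eq_abs]
    have hconj : Real.HolderConjugate 2 2 := Real.holderConjugate_iff.mpr ⟨by norm_num, by norm_num⟩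
    have hof : ENNReal.ofReal (2 : ℝ) = 2 := by norm_num
    have hHolder := integral_mul_le_Lp_mul_Lq_of_nonneg hconj
      (f := fun x => ‖fδ x - f x‖) (g := fun x => ‖G x‖)
      (ae_of_all _ fun x => norm_nonneg _) (ae_of_all _ fun x => norm_nonneg _)
      (by rw [hof]; exact hdf2.norm) (by rw [hof]; exact hG2.norm)
    have he1 : ∫ x, ‖fδ x - f x‖ ^ (2 : ℝ) ∂ρ = ∫ x, (fδ x - f x) ^ 2 ∂ρ := by
      refine integral_congr_ae (ae_of_all _ fun x => ?_)
      beta_reduce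
      rw [Real.norm_eq_abs, show (2 : ℝ) = ((2 : ℕ) : ℝ) by norm_num,
        Real.rpow_natCast, sq_abs]
    have he2 : ∫ x, ‖G x‖ ^ (2 : ℝ) ∂ρ = ∫ x, G x ^ 2 ∂ρ := by
      refine integral_congr_ae (ae_of_all _ fun x => ?_)
      beta_reduce
      rw [Real.norm_eq_abs, show (2 : ℝ) = ((2 : ℕ) : ℝ) by norm_num,
        Real.rpow_natCast, sq_abs]
    rw [he1, he2] at hHolder
    have hd2nonneg : 0 ≤ ∫ x, (fδ x - f x) ^ 2 ∂ρ := integral_nonneg fun x => sq_nonneg _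
    have hrw1 : (∫ x, (fδ x - f x) ^ 2 ∂ρ) ^ ((1 : ℝ) / 2)
        = Real.sqrt (∫ x, (fδ x - f x) ^ 2 ∂ρ) := (Real.sqrt_eq_rpow _).symm
    have hrw2 : (∫ x, G x ^ 2 ∂ρ) ^ ((1 : ℝ) / 2) = s := by
      rw [hs]
      exact (Real.sqrt_eq_rpow _).symm
    have hnoise' : Real.sqrt (∫ x, (fδ x - f x) ^ 2 ∂ρ) ≤ δ := by
      have : L2norm ρ (fun x => fδ x - f x) = Real.sqrt (∫ x, (fδ x - f x) ^ 2 ∂ρ) := rfl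
      rw [this] at hnoise
      exact hnoise
    calc ∫ x, (fδ x - f x) * G x ∂ρ ≤ ∫ x, ‖fδ x - f x‖ * ‖G x‖ ∂ρ := habs
      _ ≤ (∫ x, (fδ x - f x) ^ 2 ∂ρ) ^ ((1 : ℝ) / 2) * (∫ x, G x ^ 2 ∂ρ) ^ ((1 : ℝ) / 2) :=
          hHolder
      _ = Real.sqrt (∫ x, (fδ x - f x) ^ 2 ∂ρ) * s := by rw [hrw1, hrw2]
      _ ≤ δ * s := mul_le_mul_of_nonneg_right hnoise' hs0
  -- conclude
  rw [hmain, hsplit, horth0, hsq]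
  nlinarith [sq_nonneg (s - δ / 2)]

end
end

section
/- Let δ > 0 and f^δ ∈ L²(ρ) with ‖f^δ − f‖_{L²(ρ)} ≤ δ, and let μ† ∈ M(Ω) satisfy the orthogonality condition L_ρ(f − Kμ†) = 0 on Ω. Then for every ν ∈ M(Ω), the quantity ∫_Ω L_ρ(f^δ − Kν) d(ν − μ†) is strictly negative whenever ‖f^δ − Kν‖_{L²(ρ)} > δ + ‖f − Kμ†‖_{L²(ρ)}, and also whenever ‖Kμ† − Kν‖_{L²(ρ)} > δ. -/
open MeasureTheory RealInnerProductSpace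

noncomputable section

section Helpers

variable {d : ℕ} {Ω : Set (Pd d)}

lemma ker_pair_sm (σ : ℝ → ℝ) (hσc : Continuous σ) :
    StronglyMeasurable fun p : ↥Ω × Ed d => σ (⟪(p.1 : Pd d).1, p.2⟫ + (p.1 : Pd d).2) := by
  have h1 : Continuous fun q : Pd d × Ed d => σ (⟪q.1.1, q.2⟫ + q.1.2) :=
    hσc.comp ((continuous_fst.fst.inner continuous_snd).add continuous_fst.snd)
  have h2 : Measurable fun p : ↥Ω × Ed d => ((p.1 : Pd d), p.2) :=
    (measurable_subtype_coe.comp measurable_fst).prodMk measurable_snd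
  exact (h1.measurable.comp h2).stronglyMeasurable

lemma ker_slice_sm (σ : ℝ → ℝ) (hσc : Continuous σ) (x : Ed d) :
    StronglyMeasurable fun w : ↥Ω => σ (⟪(w : Pd d).1, x⟫ + (w : Pd d).2) := by
  have h1 : Continuous fun q : Pd d => σ (⟪q.1, x⟫ + q.2) :=
    hσc.comp ((continuous_fst.inner continuous_const).add continuous_snd)
  exact (h1.measurable.comp measurable_subtype_coe).stronglyMeasurable

lemma weight_memℒp (ρ : Measure (Ed d)) [IsProbabilityMeasure ρ]
    (hρ2 : Integrable (fun x : Ed d => ‖x‖ ^ 2) ρ) :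
    MemLp (fun x : Ed d => 1 + ‖x‖) 2 ρ := by
  have hc : Continuous fun x : Ed d => 1 + ‖x‖ := continuous_const.add continuous_norm
  rw [memLp_two_iff_integrable_sq hc.aestronglyMeasurable]
  refine ((integrable_const (2:ℝ)).add (hρ2.const_mul 2)).mono'
    ((hc.pow 2).aestronglyMeasurable) ?_
  filter_upwards with x
  have h0 := norm_nonneg x
  simp only [Pi.add_apply]
  rw [Real.norm_eq_abs, abs_of_nonneg (by positivity)]
  nlinarith [sq_nonneg (1 - ‖x‖)]

lemma memℒp_two_mul_integrable {ρ : Measure (Ed d)} {g h : Ed d → ℝ}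
    (hg : MemLp g 2 ρ) (hh : MemLp h 2 ρ) :
    Integrable (fun x => g x * h x) ρ := by
  have hg2 := (memLp_two_iff_integrable_sq hg.aestronglyMeasurable).mp hg
  have hh2 := (memLp_two_iff_integrable_sq hh.aestronglyMeasurable).mp hh
  refine (hg2.add hh2).mono' (hg.aestronglyMeasurable.mul hh.aestronglyMeasurable) ?_
  filter_upwards with x
  simp only [Pi.add_apply]
  rw [Real.norm_eq_abs, abs_mul]
  nlinarith [sq_nonneg (|g x| - |h x|), sq_abs (g x), sq_abs (h x),
    mul_nonneg (abs_nonneg (g x)) (abs_nonneg (h x))]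

lemma integrable_comp_snd' {α β : Type*} [MeasurableSpace α] [MeasurableSpace β]
    (P : Measure α) [IsFiniteMeasure P] (ρ : Measure β) [SFinite ρ] {ψ : β → ℝ}
    (hψ : Integrable ψ ρ) : Integrable (fun p : α × β => ψ p.2) (P.prod ρ) := by
  rw [MeasureTheory.integrable_prod_iff hψ.aestronglyMeasurable.comp_snd]
  exact ⟨Filter.Eventually.of_forall fun _ => hψ, by simpa using integrable_const (∫ y, ‖ψ y‖ ∂ρ)⟩

lemma ker_prod_integrable {ρ : Measure (Ed d)} [IsProbabilityMeasure ρ]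
    (σ : ℝ → ℝ) (hσc : Continuous σ) {C : ℝ}
    (hC : ∀ (w : ↥Ω) (x : Ed d), |σ (⟪(w : Pd d).1, x⟫ + (w : Pd d).2)| ≤ C * (1 + ‖x‖))
    (hρ2 : Integrable (fun x : Ed d => ‖x‖ ^ 2) ρ)
    {g : Ed d → ℝ} (hgsm : StronglyMeasurable g) (hg : MemLp g 2 ρ)
    (P : Measure ↥Ω) [IsFiniteMeasure P] :
    Integrable (fun p : ↥Ω × Ed d => g p.2 * σ (⟪(p.1 : Pd d).1, p.2⟫ + (p.1 : Pd d).2))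
      (P.prod ρ) := by
  have hbase : Integrable (fun x => |g x * (C * (1 + ‖x‖))|) ρ :=
    (memℒp_two_mul_integrable hg ((weight_memℒp ρ hρ2).const_mul C)).abs
  refine (integrable_comp_snd' P ρ hbase).mono'
    (((hgsm.comp_measurable measurable_snd).mul (ker_pair_sm σ hσc)).aestronglyMeasurable) ?_
  filter_upwards with p
  have h1 := hC p.1 p.2
  have h0 : 0 ≤ C * (1 + ‖p.2‖) := le_trans (abs_nonneg _) h1
  rw [Real.norm_eq_abs, abs_mul, abs_mul]
  calc |g p.2| * |σ (⟪(p.1 : Pd d).1, p.2⟫ + (p.1 : Pd d).2)|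
      ≤ |g p.2| * (C * (1 + ‖p.2‖)) := mul_le_mul_of_nonneg_left h1 (abs_nonneg _)
    _ = |g p.2| * |C * (1 + ‖p.2‖)| := by rw [abs_of_nonneg h0]

lemma swapFubini {ρ : Measure (Ed d)} [IsProbabilityMeasure ρ]
    (σ : ℝ → ℝ) (hσc : Continuous σ) {C : ℝ}
    (hC : ∀ (w : ↥Ω) (x : Ed d), |σ (⟪(w : Pd d).1, x⟫ + (w : Pd d).2)| ≤ C * (1 + ‖x‖))
    (hρ2 : Integrable (fun x : Ed d => ‖x‖ ^ 2) ρ)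
    {g : Ed d → ℝ} (hgsm : StronglyMeasurable g) (hg : MemLp g 2 ρ)
    (P : Measure ↥Ω) [IsFiniteMeasure P] :
    ∫ w, (∫ x, g x * σ (⟪(w : Pd d).1, x⟫ + (w : Pd d).2) ∂ρ) ∂P
      = ∫ x, g x * (∫ w, σ (⟪(w : Pd d).1, x⟫ + (w : Pd d).2) ∂P) ∂ρ := by
  rw [MeasureTheory.integral_integral_swap
    (ker_prod_integrable σ hσc hC hρ2 hgsm hg P)]
  simp_rw [MeasureTheory.integral_const_mul]

lemma sInt_Lop_eq {ρ : Measure (Ed d)} [IsProbabilityMeasure ρ]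
    (σ : ℝ → ℝ) (hσc : Continuous σ) {C : ℝ}
    (hC : ∀ (w : ↥Ω) (x : Ed d), |σ (⟪(w : Pd d).1, x⟫ + (w : Pd d).2)| ≤ C * (1 + ‖x‖))
    (hρ2 : Integrable (fun x : Ed d => ‖x‖ ^ 2) ρ)
    {g : Ed d → ℝ} (hgsm : StronglyMeasurable g) (hg : MemLp g 2 ρ)
    (τ : SignedMeasure ↥Ω) :
    sInt τ (fun w => Lop σ ρ g (w : Pd d)) = ∫ x, g x * Kop σ τ x ∂ρ := by
  have hint : ∀ (Q : Measure ↥Ω) [IsFiniteMeasure Q],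
      Integrable (fun x => g x * ∫ w : ↥Ω, σ (⟪(w : Pd d).1, x⟫ + (w : Pd d).2) ∂Q) ρ := by
    intro Q hQ
    have h1 := (ker_prod_integrable σ hσc hC hρ2 hgsm hg Q).swap
    have h2 := h1.integral_prod_left
    refine h2.congr (Filter.Eventually.of_forall fun x => ?_)
    simp only [Function.comp_apply, Prod.swap_prod_mk, Prod.fst_swap, Prod.snd_swap]
    exact MeasureTheory.integral_const_mul _ _
  simp only [sInt, Lop, Kop]
  rw [swapFubini σ hσc hC hρ2 hgsm hg τ.toJordanDecomposition.posPart,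
    swapFubini σ hσc hC hρ2 hgsm hg τ.toJordanDecomposition.negPart,
    ← MeasureTheory.integral_sub (hint _) (hint _)]
  exact integral_congr_ae (Filter.Eventually.of_forall fun x => (mul_sub _ _ _).symm)

lemma sInt_sub_eq {α : Type*} [MeasurableSpace α] (τ₁ τ₂ : SignedMeasure α) {h : α → ℝ}
    (hm : StronglyMeasurable h) {B : ℝ} (hB : ∀ a, |h a| ≤ B) :
    sInt (τ₁ - τ₂) h = sInt τ₁ h - sInt τ₂ h := by
  have hint : ∀ (Q : Measure α) [IsFiniteMeasure Q], Integrable h Q := by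
    intro Q hQ
    refine (integrable_const B).mono' hm.aestronglyMeasurable ?_
    filter_upwards with a
    rw [Real.norm_eq_abs]; exact hB a
  set p := (τ₁ - τ₂).toJordanDecomposition.posPart with hp
  set n := (τ₁ - τ₂).toJordanDecomposition.negPart with hn
  set p₁ := τ₁.toJordanDecomposition.posPart with hp1
  set n₁ := τ₁.toJordanDecomposition.negPart with hn1
  set p₂ := τ₂.toJordanDecomposition.posPart with hp2
  set n₂ := τ₂.toJordanDecomposition.negPart with hn2
  have e0 : ∀ τ : SignedMeasure α, τ.toJordanDecomposition.posPart.toSignedMeasure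
      - τ.toJordanDecomposition.negPart.toSignedMeasure = τ := fun τ =>
    τ.toSignedMeasure_toJordanDecomposition
  have key : p + (n₁ + p₂) = p₁ + n₂ + n := by
    rw [← MeasureTheory.Measure.toSignedMeasure_eq_toSignedMeasure_iff]
    simp only [Measure.toSignedMeasure_add]
    have hz : p.toSignedMeasure + (n₁.toSignedMeasure + p₂.toSignedMeasure)
        - (p₁.toSignedMeasure + n₂.toSignedMeasure + n.toSignedMeasure)
        = (p.toSignedMeasure - n.toSignedMeasure)
          - ((p₁.toSignedMeasure - n₁.toSignedMeasure)
            - (p₂.toSignedMeasure - n₂.toSignedMeasure)) := by abel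
    rw [e0 (τ₁ - τ₂), e0 τ₁, e0 τ₂, sub_self] at hz
    exact sub_eq_zero.mp hz
  have l1 : ∫ a, h a ∂(p + (n₁ + p₂))
      = ∫ a, h a ∂p + (∫ a, h a ∂n₁ + ∫ a, h a ∂p₂) := by
    rw [integral_add_measure (hint _) ((hint _).add_measure (hint _)),
      integral_add_measure (hint _) (hint _)]
  have l2 : ∫ a, h a ∂(p₁ + n₂ + n)
      = ∫ a, h a ∂p₁ + ∫ a, h a ∂n₂ + ∫ a, h a ∂n := by
    rw [integral_add_measure ((hint _).add_measure (hint _)) (hint _),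
      integral_add_measure (hint _) (hint _)]
  have hI := l1.symm.trans ((congrArg (fun Q : Measure α => ∫ a, h a ∂Q) key).trans l2)
  simp only [sInt]
  linarith

lemma Kop_sub_apply (σ : ℝ → ℝ) (hσc : Continuous σ) {C : ℝ}
    (hC : ∀ (w : ↥Ω) (x : Ed d), |σ (⟪(w : Pd d).1, x⟫ + (w : Pd d).2)| ≤ C * (1 + ‖x‖))
    (τ₁ τ₂ : SignedMeasure ↥Ω) (x : Ed d) :
    Kop σ (τ₁ - τ₂) x = Kop σ τ₁ x - Kop σ τ₂ x :=
  sInt_sub_eq τ₁ τ₂ (ker_slice_sm σ hσc x) (fun w => hC w x)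

lemma Kop_sm (σ : ℝ → ℝ) (hσc : Continuous σ) (τ : SignedMeasure ↥Ω) :
    StronglyMeasurable (Kop σ τ) := by
  show StronglyMeasurable fun x : Ed d =>
    (∫ w : ↥Ω, σ (⟪(w : Pd d).1, x⟫ + (w : Pd d).2) ∂τ.toJordanDecomposition.posPart)
      - ∫ w : ↥Ω, σ (⟪(w : Pd d).1, x⟫ + (w : Pd d).2) ∂τ.toJordanDecomposition.negPart
  exact ((ker_pair_sm σ hσc).integral_prod_left').sub ((ker_pair_sm σ hσc).integral_prod_left')

lemma Kop_bound (σ : ℝ → ℝ) {C : ℝ}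
    (hC : ∀ (w : ↥Ω) (x : Ed d), |σ (⟪(w : Pd d).1, x⟫ + (w : Pd d).2)| ≤ C * (1 + ‖x‖))
    (τ : SignedMeasure ↥Ω) (x : Ed d) :
    |Kop σ τ x| ≤ ((τ.toJordanDecomposition.posPart Set.univ).toReal
      + (τ.toJordanDecomposition.negPart Set.univ).toReal) * (C * (1 + ‖x‖)) := by
  have hb : ∀ (Q : Measure ↥Ω) [IsFiniteMeasure Q],
      |∫ w : ↥Ω, σ (⟪(w : Pd d).1, x⟫ + (w : Pd d).2) ∂Q|
        ≤ (Q Set.univ).toReal * (C * (1 + ‖x‖)) := by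
    intro Q _
    rw [← Real.norm_eq_abs]
    calc ‖∫ w : ↥Ω, σ (⟪(w : Pd d).1, x⟫ + (w : Pd d).2) ∂Q‖
        ≤ ∫ _w : ↥Ω, C * (1 + ‖x‖) ∂Q := MeasureTheory.norm_integral_le_of_norm_le
          (integrable_const _)
          (Filter.Eventually.of_forall fun w => by rw [Real.norm_eq_abs]; exact hC w x)
      _ = (Q Set.univ).toReal * (C * (1 + ‖x‖)) := by rw [integral_const, smul_eq_mul, measureReal_def]
  have h1 := hb τ.toJordanDecomposition.posPart
  have h2 := hb τ.toJordanDecomposition.negPart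
  have h3 : |Kop σ τ x| ≤ |∫ w : ↥Ω, σ (⟪(w : Pd d).1, x⟫ + (w : Pd d).2)
        ∂τ.toJordanDecomposition.posPart|
      + |∫ w : ↥Ω, σ (⟪(w : Pd d).1, x⟫ + (w : Pd d).2) ∂τ.toJordanDecomposition.negPart| := by
    show |_ - _| ≤ _
    exact abs_sub _ _
  linarith [h3, h1, h2, add_mul (τ.toJordanDecomposition.posPart Set.univ).toReal
    (τ.toJordanDecomposition.negPart Set.univ).toReal (C * (1 + ‖x‖))]

lemma Kop_memℒp {ρ : Measure (Ed d)} [IsProbabilityMeasure ρ]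
    (σ : ℝ → ℝ) (hσc : Continuous σ) {C : ℝ}
    (hC : ∀ (w : ↥Ω) (x : Ed d), |σ (⟪(w : Pd d).1, x⟫ + (w : Pd d).2)| ≤ C * (1 + ‖x‖))
    (hC0 : 0 ≤ C)
    (hρ2 : Integrable (fun x : Ed d => ‖x‖ ^ 2) ρ)
    (τ : SignedMeasure ↥Ω) :
    MemLp (Kop σ τ) 2 ρ := by
  set M := ((τ.toJordanDecomposition.posPart Set.univ).toReal
    + (τ.toJordanDecomposition.negPart Set.univ).toReal) * C with hM
  have hM0 : 0 ≤ M := mul_nonneg (by positivity) hC0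
  refine MemLp.of_le ((weight_memℒp ρ hρ2).const_mul M)
    (Kop_sm σ hσc τ).aestronglyMeasurable ?_
  filter_upwards with x
  have hx0 := norm_nonneg x
  rw [Real.norm_eq_abs, Real.norm_eq_abs]
  refine (Kop_bound σ hC τ x).trans ?_
  rw [abs_of_nonneg (by positivity), hM, mul_assoc]

lemma L2norm_eq_norm {ρ : Measure (Ed d)} {g : Ed d → ℝ} (hg : MemLp g 2 ρ) :
    L2norm ρ g = ‖hg.toLp g‖ := by
  have h1 : (‖hg.toLp g‖ : ℝ) ^ 2 = L2sq ρ g := by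
    rw [← real_inner_self_eq_norm_sq, MeasureTheory.L2.inner_def]
    apply integral_congr_ae
    filter_upwards [hg.coeFn_toLp] with x hx
    rw [hx]
    simp [RCLike.inner_apply, sq]
  rw [L2norm, ← h1, Real.sqrt_sq (norm_nonneg _)]

lemma integral_mul_eq_inner {ρ : Measure (Ed d)} {g h : Ed d → ℝ}
    (hg : MemLp g 2 ρ) (hh : MemLp h 2 ρ) :
    ∫ x, g x * h x ∂ρ = ⟪hg.toLp g, hh.toLp h⟫ := by
  rw [MeasureTheory.L2.inner_def]
  symm
  apply integral_congr_ae
  filter_upwards [hg.coeFn_toLp, hh.coeFn_toLp] with x h1 h2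
  rw [h1, h2]
  simp [RCLike.inner_apply, mul_comm]

end Helpers

set_option maxHeartbeats 1000000 in
/-- With measurement noise ‖f^δ − f‖_{L²(ρ)} ≤ δ and μ† satisfying the
orthogonality condition for f, for every ν the quantity ∫_Ω L_ρ(f^δ − Kν) d(ν − μ†) is
strictly negative whenever ‖f^δ − Kν‖ > δ + ‖f − Kμ†‖, and whenever ‖Kμ† − Kν‖ > δ. -/
theorem noisy_strict_descent
    {d : ℕ} (Ω : Set (Pd d)) (hΩ : IsCompact Ω)
    (ρ : Measure (Ed d)) [IsProbabilityMeasure ρ]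
    (hρ2 : Integrable (fun x : Ed d => ‖x‖ ^ 2) ρ)
    (σ : ℝ → ℝ) (Lσ : NNReal) (hσ : LipschitzWith Lσ σ)
    (f : Ed d → ℝ) (hfm : Measurable f) (hf2 : MemLp f 2 ρ)
    (δ : ℝ) (hδ : 0 < δ)
    (fδ : Ed d → ℝ) (hfδm : Measurable fδ) (hfδ2 : MemLp fδ 2 ρ)
    (hnoise : L2norm ρ (fun x => fδ x - f x) ≤ δ)
    (μdag : SignedMeasure ↥Ω)
    (horth : ∀ w ∈ Ω, Lop σ ρ (fun x => f x - Kop σ μdag x) w = 0) :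
    ∀ ν : SignedMeasure ↥Ω,
      (δ + L2norm ρ (fun x => f x - Kop σ μdag x) <
          L2norm ρ (fun x => fδ x - Kop σ ν x) →
        sInt (ν - μdag) (fun w => Lop σ ρ (fun x => fδ x - Kop σ ν x) (w : Pd d)) < 0) ∧
      (δ < L2norm ρ (fun x => Kop σ μdag x - Kop σ ν x) →
        sInt (ν - μdag) (fun w => Lop σ ρ (fun x => fδ x - Kop σ ν x) (w : Pd d)) < 0) := by
  -- a uniform linear-growth bound for the kernel
  obtain ⟨R, hR⟩ := hΩ.isBounded.exists_norm_le
  set C : ℝ := |σ 0| + (Lσ : ℝ) * max R 0 with hCdef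
  have hLσ : (0:ℝ) ≤ Lσ := Lσ.coe_nonneg
  have hM0 : (0:ℝ) ≤ max R 0 := le_max_right _ _
  have hC0 : 0 ≤ C := by positivity
  have hC : ∀ (w : ↥Ω) (x : Ed d), |σ (⟪(w : Pd d).1, x⟫ + (w : Pd d).2)| ≤ C * (1 + ‖x‖) := by
    intro w x
    set t := ⟪(w : Pd d).1, x⟫ + (w : Pd d).2 with ht
    have h1 : |σ t - σ 0| ≤ (Lσ : ℝ) * |t| := by
      have := hσ.dist_le_mul t 0
      simpa [Real.dist_eq] using this
    have hw : ‖(w : Pd d)‖ ≤ max R 0 := le_max_iff.mpr (Or.inl (hR _ w.2))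
    have ha : ‖(w : Pd d).1‖ ≤ max R 0 := (norm_fst_le _).trans hw
    have hb : |(w : Pd d).2| ≤ max R 0 := by
      have := (norm_snd_le ((w : Pd d))).trans hw
      simpa [Real.norm_eq_abs] using this
    have hx0 := norm_nonneg x
    have htb : |t| ≤ max R 0 * ‖x‖ + max R 0 := by
      refine (abs_add_le _ _).trans ?_
      have hi : |⟪(w : Pd d).1, x⟫| ≤ ‖(w : Pd d).1‖ * ‖x‖ := abs_real_inner_le_norm _ _
      have hi2 : ‖(w : Pd d).1‖ * ‖x‖ ≤ max R 0 * ‖x‖ :=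
        mul_le_mul_of_nonneg_right ha hx0
      linarith
    have h2 : |σ t| ≤ |σ 0| + (Lσ:ℝ) * |t| := by
      have h3 := abs_sub_abs_le_abs_sub (σ t) (σ 0)
      linarith
    have habs0 := abs_nonneg (σ 0)
    have habst := abs_nonneg t
    calc |σ t| ≤ |σ 0| + (Lσ:ℝ) * (max R 0 * ‖x‖ + max R 0) := by nlinarith
      _ ≤ C * (1 + ‖x‖) := by rw [hCdef]; nlinarith
  have hσc := hσ.continuous
  -- membership facts
  have hKνsm : ∀ τ : SignedMeasure ↥Ω, StronglyMeasurable (Kop σ τ) := Kop_sm σ hσc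
  have hKmem : ∀ τ : SignedMeasure ↥Ω, MemLp (Kop σ τ) 2 ρ :=
    Kop_memℒp σ hσc hC hC0 hρ2
  intro ν
  have hgsm : StronglyMeasurable fun x => fδ x - Kop σ ν x :=
    hfδm.stronglyMeasurable.sub (hKνsm ν)
  have hrsm : StronglyMeasurable fun x => f x - Kop σ μdag x :=
    hfm.stronglyMeasurable.sub (hKνsm μdag)
  have hgmem : MemLp (fun x => fδ x - Kop σ ν x) 2 ρ := hfδ2.sub (hKmem ν)
  have hrmem : MemLp (fun x => f x - Kop σ μdag x) 2 ρ := hf2.sub (hKmem μdag)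
  have hemem : MemLp (fun x => fδ x - f x) 2 ρ := hfδ2.sub hf2
  have hqmem : MemLp (fun x => Kop σ μdag x - Kop σ ν x) 2 ρ := (hKmem μdag).sub (hKmem ν)
  set Gv := hgmem.toLp _ with hGv
  set Rv := hrmem.toLp _ with hRv
  set Ev := hemem.toLp _ with hEv
  set Qv := hqmem.toLp _ with hQv
  have hGnorm : L2norm ρ (fun x => fδ x - Kop σ ν x) = ‖Gv‖ := L2norm_eq_norm hgmem
  have hRnorm : L2norm ρ (fun x => f x - Kop σ μdag x) = ‖Rv‖ := L2norm_eq_norm hrmem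
  have hEnorm : L2norm ρ (fun x => fδ x - f x) = ‖Ev‖ := L2norm_eq_norm hemem
  have hQnorm : L2norm ρ (fun x => Kop σ μdag x - Kop σ ν x) = ‖Qv‖ := L2norm_eq_norm hqmem
  have hE : ‖Ev‖ ≤ δ := hEnorm ▸ hnoise
  -- decomposition Gv = Ev + Rv + Qv
  have hsum : Gv = Ev + Rv + Qv := by
    have h1 : (fun x => fδ x - Kop σ ν x) =ᵐ[ρ]
        (((fun x => fδ x - f x) + fun x => f x - Kop σ μdag x)
          + fun x => Kop σ μdag x - Kop σ ν x) := by
      refine Filter.Eventually.of_forall fun x => ?_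
      simp only [Pi.add_apply]
      ring
    calc Gv = ((hemem.add hrmem).add hqmem).toLp _ := MemLp.toLp_congr _ _ h1
      _ = Ev + Rv + Qv := by
        rw [MemLp.toLp_add, MemLp.toLp_add]
        exact hemem.add hrmem
  -- orthogonality : ⟪Rv, Qv⟫ = 0
  have hRQ : ⟪Rv, Qv⟫ = 0 := by
    have h0 := sInt_Lop_eq σ hσc hC hρ2 hrsm hrmem (μdag - ν)
    have hz : (fun w : ↥Ω => Lop σ ρ (fun x => f x - Kop σ μdag x) (w : Pd d))
        = fun _ => (0:ℝ) := funext fun w => horth _ w.2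
    rw [hz] at h0
    have h0' : (0:ℝ) = ∫ x, (f x - Kop σ μdag x) * Kop σ (μdag - ν) x ∂ρ := by
      rw [← h0]; simp [sInt]
    have h1 : ∫ x, (f x - Kop σ μdag x) * Kop σ (μdag - ν) x ∂ρ
        = ∫ x, (f x - Kop σ μdag x) * (Kop σ μdag x - Kop σ ν x) ∂ρ := by
      refine integral_congr_ae (Filter.Eventually.of_forall fun x => ?_)
      beta_reduce
      rw [Kop_sub_apply σ hσc hC μdag ν x]
    rw [← integral_mul_eq_inner hrmem hqmem, ← h1, ← h0']
  -- the main identity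
  have hS : sInt (ν - μdag) (fun w => Lop σ ρ (fun x => fδ x - Kop σ ν x) (w : Pd d))
      = -⟪Gv, Qv⟫ := by
    rw [sInt_Lop_eq σ hσc hC hρ2 hgsm hgmem (ν - μdag)]
    have h1 : ∫ x, (fδ x - Kop σ ν x) * Kop σ (ν - μdag) x ∂ρ
        = ∫ x, (fδ x - Kop σ ν x) * -(Kop σ μdag x - Kop σ ν x) ∂ρ := by
      refine integral_congr_ae (Filter.Eventually.of_forall fun x => ?_)
      beta_reduce
      rw [Kop_sub_apply σ hσc hC ν μdag x]
      ring_nf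
    rw [h1]
    simp_rw [mul_neg]
    rw [integral_neg, integral_mul_eq_inner hgmem hqmem]
  constructor
  · intro hyp
    rw [hGnorm, hRnorm] at hyp
    rw [hS]
    have hQeq : Qv = Gv - Ev - Rv := by rw [hsum]; abel
    have h1 : ⟪Gv, Ev⟫ ≤ ‖Gv‖ * ‖Ev‖ := real_inner_le_norm _ _
    have h2 : ⟪Gv, Rv⟫ ≤ ‖Gv‖ * ‖Rv‖ := real_inner_le_norm _ _
    have h3 : ⟪Gv, Qv⟫ = ‖Gv‖ ^ 2 - ⟪Gv, Ev⟫ - ⟪Gv, Rv⟫ := by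
      rw [hQeq, inner_sub_right, inner_sub_right, real_inner_self_eq_norm_sq]
    have hGnn : (0:ℝ) ≤ ‖Gv‖ := norm_nonneg _
    have hRnn : (0:ℝ) ≤ ‖Rv‖ := norm_nonneg _
    have hG0 : 0 < ‖Gv‖ := by linarith
    have hpos : 0 < ⟪Gv, Qv⟫ := by nlinarith [mul_le_mul_of_nonneg_left hE hGnn]
    linarith
  · intro hyp
    rw [hQnorm] at hyp
    rw [hS]
    have h3 : ⟪Gv, Qv⟫ = ⟪Ev, Qv⟫ + ⟪Rv, Qv⟫ + ‖Qv‖ ^ 2 := by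
      rw [hsum, inner_add_left, inner_add_left, real_inner_self_eq_norm_sq]
    have h1 : |⟪Ev, Qv⟫| ≤ ‖Ev‖ * ‖Qv‖ := abs_real_inner_le_norm _ _
    have hQnn : (0:ℝ) ≤ ‖Qv‖ := norm_nonneg _
    have hpos : 0 < ⟪Gv, Qv⟫ := by
      nlinarith [neg_abs_le ⟪Ev, Qv⟫, mul_le_mul_of_nonneg_right hE hQnn, hRQ]
    linarith

end
end

section
/- Let ρ^ε be a Borel probability measure on 𝒳 with finite second moment and f ∈ L²(ρ) ∩ L²(ρ^ε). Let μ† ∈ M(Ω) satisfy L_ρ(f − Kμ†) = 0 on Ω and let ν† ∈ M(Ω) satisfy L_{ρ^ε}(f − Kν†) = 0 on Ω. Then for every ν ∈ M(Ω): ∫_Ω L_{ρ^ε}(f − Kν) d(ν − μ†) ≤ ¼‖f − Kμ†‖²_{L²(ρ^ε)}, and also ∫_Ω L_{ρ^ε}(f − Kν) d(ν − μ†) ≤ ¼‖Kν† − Kμ†‖²_{L²(ρ^ε)}. -/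
open MeasureTheory RealInnerProductSpace

noncomputable section

section AuxAll
open ENNReal

section Aux
variable {α : Type*} [MeasurableSpace α]

lemma aux_integrable_of_bounded {μ : Measure α} [IsFiniteMeasure μ] {g : α → ℝ} (c : ℝ)
    (hm : AEStronglyMeasurable g μ) (hb : ∀ x, ‖g x‖ ≤ c) : Integrable g μ :=
  Integrable.mono' (integrable_const c) hm (Filter.Eventually.of_forall hb)

lemma aux_mul_integrable {μ : Measure α} {g h : α → ℝ}
    (hg : MemLp g 2 μ) (hh : MemLp h 2 μ) : Integrable (fun x => g x * h x) μ := by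
  rw [← memLp_one_iff_integrable]
  have h2 : (1:ℝ≥0∞)/1 = 1/2 + 1/2 := by simp; rw [ENNReal.inv_two_add_inv_two]
  exact hh.smul (r := 1) hg

lemma aux_toSM_inj {μ ν : Measure α} [IsFiniteMeasure μ] [IsFiniteMeasure ν]
    (h : μ.toSignedMeasure = ν.toSignedMeasure) : μ = ν := by
  ext s hs
  have h2 := congrArg (fun m : SignedMeasure α => m s) h
  simp only [Measure.toSignedMeasure_apply_measurable hs] at h2
  exact (ENNReal.toReal_eq_toReal_iff' (measure_ne_top _ _) (measure_ne_top _ _)).mp h2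

lemma aux_sInt_sub (μ ν : SignedMeasure α) {g : α → ℝ} (hm : StronglyMeasurable g) (c : ℝ)
    (hb : ∀ x, ‖g x‖ ≤ c) : sInt (μ - ν) g = sInt μ g - sInt ν g := by
  set J := (μ - ν).toJordanDecomposition with hJdef
  set Jμ := μ.toJordanDecomposition with hJμdef
  set Jν := ν.toJordanDecomposition with hJνdef
  have h1 : J.posPart.toSignedMeasure - J.negPart.toSignedMeasure = μ - ν :=
    (μ - ν).toSignedMeasure_toJordanDecomposition
  have h2 : Jμ.posPart.toSignedMeasure - Jμ.negPart.toSignedMeasure = μ :=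
    μ.toSignedMeasure_toJordanDecomposition
  have h3 : Jν.posPart.toSignedMeasure - Jν.negPart.toSignedMeasure = ν :=
    ν.toSignedMeasure_toJordanDecomposition
  have h4 : J.posPart.toSignedMeasure - J.negPart.toSignedMeasure =
      (Jμ.posPart.toSignedMeasure + Jν.negPart.toSignedMeasure) -
        (Jμ.negPart.toSignedMeasure + Jν.posPart.toSignedMeasure) := by
    rw [h1, ← h2, ← h3]; abel
  have h5 := sub_eq_sub_iff_add_eq_add.mp h4
  have key : J.posPart + (Jμ.negPart + Jν.posPart) = J.negPart + (Jμ.posPart + Jν.negPart) := by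
    apply aux_toSM_inj
    rw [Measure.toSignedMeasure_add, Measure.toSignedMeasure_add,
      Measure.toSignedMeasure_add, Measure.toSignedMeasure_add]
    calc J.posPart.toSignedMeasure +
          (Jμ.negPart.toSignedMeasure + Jν.posPart.toSignedMeasure)
        = J.posPart.toSignedMeasure +
          (Jμ.negPart.toSignedMeasure + Jν.posPart.toSignedMeasure) := rfl
      _ = J.negPart.toSignedMeasure +
          (Jμ.posPart.toSignedMeasure + Jν.negPart.toSignedMeasure) := by
          have := h5; abel_nf at this ⊢; linear_combination (norm := abel1) this
  have hint : ∀ (p : Measure α) [IsFiniteMeasure p], Integrable g p := fun p _ =>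
    aux_integrable_of_bounded c hm.aestronglyMeasurable hb
  have e : ∫ w, g w ∂(J.posPart + (Jμ.negPart + Jν.posPart)) =
      ∫ w, g w ∂(J.negPart + (Jμ.posPart + Jν.negPart)) := by rw [key]
  rw [integral_add_measure (hint _) (hint _), integral_add_measure (hint _) (hint _),
    integral_add_measure (hint _) (hint _), integral_add_measure (hint _) (hint _)] at e
  simp only [sInt]
  linarith

end Aux

section Aux2
variable {d : ℕ} {Ω : Set (Pd d)}

lemma aux_cont (σ : ℝ → ℝ) (hσ : Continuous σ) :
    Continuous (fun z : Ed d × ↥Ω => σ (⟪(z.2 : Pd d).1, z.1⟫ + (z.2 : Pd d).2)) := by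
  apply hσ.comp
  exact ((continuous_subtype_val.comp continuous_snd).fst.inner continuous_fst).add
    (continuous_subtype_val.comp continuous_snd).snd

lemma aux_cont_w (σ : ℝ → ℝ) (hσ : Continuous σ) (x : Ed d) :
    Continuous (fun w : ↥Ω => σ (⟪(w : Pd d).1, x⟫ + (w : Pd d).2)) := by
  apply hσ.comp
  exact (continuous_subtype_val.fst.inner continuous_const).add continuous_subtype_val.snd

lemma aux_Ip_sm {σ : ℝ → ℝ} (hσ : Continuous σ) (p : Measure ↥Ω) [SFinite p] :
    StronglyMeasurable (fun x : Ed d => ∫ w, σ (⟪(w : Pd d).1, x⟫ + (w : Pd d).2) ∂p) :=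
  (aux_cont σ hσ).stronglyMeasurable.integral_prod_right'

lemma aux_K_sm {σ : ℝ → ℝ} (hσ : Continuous σ) (μ : SignedMeasure ↥Ω) :
    StronglyMeasurable (Kop σ μ) :=
  (aux_Ip_sm hσ _).sub (aux_Ip_sm hσ _)

end Aux2

section Aux3
variable {d : ℕ} {Ω : Set (Pd d)}

lemma aux_mul_integrable' {α : Type*} [MeasurableSpace α] {μ : Measure α} {g h : α → ℝ}
    (hg : MemLp g 2 μ) (hh : MemLp h 2 μ) : Integrable (fun x => g x * h x) μ := by
  rw [← memLp_one_iff_integrable]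
  have h2 : (1:ℝ≥0∞)/1 = 1/2 + 1/2 := by simp; rw [ENNReal.inv_two_add_inv_two]
  exact hh.smul (r := 1) hg

lemma aux_Ip_mem {σ : ℝ → ℝ} (hσ : Continuous σ) {C : ℝ} (hC : 0 ≤ C)
    (hb : ∀ (w : ↥Ω) (x : Ed d), |σ (⟪(w : Pd d).1, x⟫ + (w : Pd d).2)| ≤ C * (1 + ‖x‖))
    (ρε : Measure (Ed d)) (h1 : MemLp (fun x : Ed d => 1 + ‖x‖) 2 ρε)
    (p : Measure ↥Ω) [IsFiniteMeasure p] :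
    MemLp (fun x : Ed d => ∫ w, σ (⟪(w : Pd d).1, x⟫ + (w : Pd d).2) ∂p) 2 ρε := by
  have hM : 0 ≤ C * (p Set.univ).toReal := mul_nonneg hC ENNReal.toReal_nonneg
  refine MemLp.of_le (h1.const_mul (C * (p Set.univ).toReal))
    (aux_Ip_sm hσ p).aestronglyMeasurable (Filter.Eventually.of_forall fun x => ?_)
  have hx : (0:ℝ) ≤ 1 + ‖x‖ := by positivity
  have := norm_integral_le_of_norm_le_const (μ := p)
    (f := fun w : ↥Ω => σ (⟪(w : Pd d).1, x⟫ + (w : Pd d).2)) (C := C * (1 + ‖x‖))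
    (Filter.Eventually.of_forall fun w => by rw [Real.norm_eq_abs]; exact hb w x)
  calc ‖∫ w, σ (⟪(w : Pd d).1, x⟫ + (w : Pd d).2) ∂p‖
      ≤ C * (1 + ‖x‖) * (p Set.univ).toReal := this
    _ = C * (p Set.univ).toReal * (1 + ‖x‖) := by ring
    _ ≤ ‖C * (p Set.univ).toReal * (1 + ‖x‖)‖ := le_abs_self _

lemma aux_K_mem {σ : ℝ → ℝ} (hσ : Continuous σ) {C : ℝ} (hC : 0 ≤ C)
    (hb : ∀ (w : ↥Ω) (x : Ed d), |σ (⟪(w : Pd d).1, x⟫ + (w : Pd d).2)| ≤ C * (1 + ‖x‖))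
    (ρε : Measure (Ed d)) (h1 : MemLp (fun x : Ed d => 1 + ‖x‖) 2 ρε)
    (μ : SignedMeasure ↥Ω) : MemLp (Kop σ μ) 2 ρε :=
  (aux_Ip_mem hσ hC hb ρε h1 _).sub (aux_Ip_mem hσ hC hb ρε h1 _)

lemma aux_slice_mem {σ : ℝ → ℝ} (hσ : Continuous σ) {C : ℝ} (hC : 0 ≤ C)
    (hb : ∀ (w : ↥Ω) (x : Ed d), |σ (⟪(w : Pd d).1, x⟫ + (w : Pd d).2)| ≤ C * (1 + ‖x‖))
    (ρε : Measure (Ed d)) (h1 : MemLp (fun x : Ed d => 1 + ‖x‖) 2 ρε) (w : ↥Ω) :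
    MemLp (fun x : Ed d => σ (⟪(w : Pd d).1, x⟫ + (w : Pd d).2)) 2 ρε := by
  refine MemLp.of_le (h1.const_mul C) ?_ (Filter.Eventually.of_forall fun x => ?_)
  · exact ((aux_cont σ hσ).comp (Continuous.prodMk_left w)).stronglyMeasurable.aestronglyMeasurable
  · have hx : (0:ℝ) ≤ 1 + ‖x‖ := by positivity
    calc ‖σ (⟪(w : Pd d).1, x⟫ + (w : Pd d).2)‖ ≤ C * (1 + ‖x‖) := by
          rw [Real.norm_eq_abs]; exact hb w x
      _ ≤ ‖C * (1 + ‖x‖)‖ := le_abs_self _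

lemma aux_swap {σ : ℝ → ℝ} (hσ : Continuous σ) {C : ℝ} (hC : 0 ≤ C)
    (hb : ∀ (w : ↥Ω) (x : Ed d), |σ (⟪(w : Pd d).1, x⟫ + (w : Pd d).2)| ≤ C * (1 + ‖x‖))
    (ρε : Measure (Ed d)) [IsFiniteMeasure ρε] (h1 : MemLp (fun x : Ed d => 1 + ‖x‖) 2 ρε)
    {φ : Ed d → ℝ} (hφm : StronglyMeasurable φ) (hφ2 : MemLp φ 2 ρε)
    (p : Measure ↥Ω) [IsFiniteMeasure p] :
    ∫ w, Lop σ ρε φ (w : Pd d) ∂p =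
      ∫ x, φ x * ∫ w, σ (⟪(w : Pd d).1, x⟫ + (w : Pd d).2) ∂p ∂ρε := by
  set F : ↥Ω → Ed d → ℝ := fun w x => φ x * σ (⟪(w : Pd d).1, x⟫ + (w : Pd d).2) with hF
  have hFsm : StronglyMeasurable (fun z : ↥Ω × Ed d => F z.1 z.2) := by
    apply StronglyMeasurable.mul
    · exact hφm.comp_measurable measurable_snd
    · exact ((aux_cont σ hσ).comp continuous_swap).stronglyMeasurable
  have hint : ∀ w : ↥Ω, Integrable (fun x => F w x) ρε := fun w =>
    aux_mul_integrable' hφ2 (aux_slice_mem hσ hC hb ρε h1 w)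
  have hDint : Integrable (fun x => |φ x| * (C * (1 + ‖x‖))) ρε :=
    aux_mul_integrable' hφ2.norm (h1.const_mul C)
  set D := ∫ x, |φ x| * (C * (1 + ‖x‖)) ∂ρε with hD
  have hprod : Integrable (fun z : ↥Ω × Ed d => F z.1 z.2) (p.prod ρε) := by
    rw [integrable_prod_iff hFsm.aestronglyMeasurable]
    refine ⟨Filter.Eventually.of_forall hint, ?_⟩
    refine Integrable.mono' (integrable_const D)
      hFsm.norm.integral_prod_right'.aestronglyMeasurable (Filter.Eventually.of_forall fun w => ?_)
    have hle : ∫ x, ‖F w x‖ ∂ρε ≤ D := by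
      refine integral_mono (hint w).norm hDint fun x => ?_
      rw [hF]; simp only [norm_mul, Real.norm_eq_abs]
      exact mul_le_mul_of_nonneg_left (hb w x) (abs_nonneg _)
    rw [Real.norm_eq_abs, abs_of_nonneg (integral_nonneg fun x => norm_nonneg _)]
    exact hle
  have hswap := integral_integral_swap (f := F) (μ := p) (ν := ρε) hprod
  calc ∫ w, Lop σ ρε φ (w : Pd d) ∂p = ∫ w, ∫ x, F w x ∂ρε ∂p := rfl
    _ = ∫ x, ∫ w, F w x ∂p ∂ρε := hswap
    _ = ∫ x, φ x * ∫ w, σ (⟪(w : Pd d).1, x⟫ + (w : Pd d).2) ∂p ∂ρε := by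
        refine integral_congr_ae (Filter.Eventually.of_forall fun x => ?_)
        exact integral_const_mul _ _

lemma aux_fubini {σ : ℝ → ℝ} (hσ : Continuous σ) {C : ℝ} (hC : 0 ≤ C)
    (hb : ∀ (w : ↥Ω) (x : Ed d), |σ (⟪(w : Pd d).1, x⟫ + (w : Pd d).2)| ≤ C * (1 + ‖x‖))
    (ρε : Measure (Ed d)) [IsFiniteMeasure ρε] (h1 : MemLp (fun x : Ed d => 1 + ‖x‖) 2 ρε)
    {φ : Ed d → ℝ} (hφm : StronglyMeasurable φ) (hφ2 : MemLp φ 2 ρε)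
    (μ : SignedMeasure ↥Ω) :
    sInt μ (fun w => Lop σ ρε φ (w : Pd d)) = ∫ x, φ x * Kop σ μ x ∂ρε := by
  set P := μ.toJordanDecomposition.posPart
  set N := μ.toJordanDecomposition.negPart
  have hP := aux_swap hσ hC hb ρε h1 hφm hφ2 P
  have hN := aux_swap hσ hC hb ρε h1 hφm hφ2 N
  have iP : Integrable (fun x => φ x * ∫ w, σ (⟪(w : Pd d).1, x⟫ + (w : Pd d).2) ∂P) ρε :=
    aux_mul_integrable' hφ2 (aux_Ip_mem hσ hC hb ρε h1 P)
  have iN : Integrable (fun x => φ x * ∫ w, σ (⟪(w : Pd d).1, x⟫ + (w : Pd d).2) ∂N) ρε :=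
    aux_mul_integrable' hφ2 (aux_Ip_mem hσ hC hb ρε h1 N)
  calc sInt μ (fun w => Lop σ ρε φ (w : Pd d))
      = (∫ x, φ x * ∫ w, σ (⟪(w : Pd d).1, x⟫ + (w : Pd d).2) ∂P ∂ρε) -
        ∫ x, φ x * ∫ w, σ (⟪(w : Pd d).1, x⟫ + (w : Pd d).2) ∂N ∂ρε := by
          rw [sInt, hP, hN]
    _ = ∫ x, (φ x * ∫ w, σ (⟪(w : Pd d).1, x⟫ + (w : Pd d).2) ∂P) -
          φ x * ∫ w, σ (⟪(w : Pd d).1, x⟫ + (w : Pd d).2) ∂N ∂ρε := (integral_sub iP iN).symm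
    _ = ∫ x, φ x * Kop σ μ x ∂ρε := by
          refine integral_congr_ae (Filter.Eventually.of_forall fun x => ?_)
          simp only [Kop, sInt]; ring

lemma aux_quarter {α : Type*} [MeasurableSpace α] {μ : Measure α} (g h : α → ℝ)
    (hg : MemLp g 2 μ) (hh : MemLp h 2 μ) :
    ∫ x, g x * h x ∂μ ≤ 1 / 4 * ∫ x, (g x + h x) ^ 2 ∂μ := by
  have hgh := aux_mul_integrable' hg hh
  have hsub : MemLp (fun x => g x - h x) 2 μ := hg.sub hh
  have hsq : Integrable (fun x => (g x - h x) ^ 2) μ := by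
    have := aux_mul_integrable' hsub hsub
    simpa [pow_two] using this
  have key : ∫ x, (g x + h x) ^ 2 ∂μ =
      (∫ x, (g x - h x) ^ 2 ∂μ) + ∫ x, 4 * (g x * h x) ∂μ := by
    rw [← integral_add hsq (hgh.const_mul 4)]
    refine integral_congr_ae (Filter.Eventually.of_forall fun x => ?_); ring
  have h4 : ∫ x, 4 * (g x * h x) ∂μ = 4 * ∫ x, g x * h x ∂μ := integral_const_mul _ _
  have pos : 0 ≤ ∫ x, (g x - h x) ^ 2 ∂μ := integral_nonneg fun x => sq_nonneg _
  rw [h4] at key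
  linarith

end Aux3

end AuxAll

/-- For a biased sampling measure ρ^ε, if μ† satisfies the orthogonality
condition for ρ and ν† the orthogonality condition for ρ^ε, then for every ν:
∫_Ω L_{ρ^ε}(f − Kν) d(ν − μ†) ≤ ¼‖f − Kμ†‖²_{L²(ρ^ε)} and
∫_Ω L_{ρ^ε}(f − Kν) d(ν − μ†) ≤ ¼‖Kν† − Kμ†‖²_{L²(ρ^ε)}. -/
theorem biased_descent_bound
    {d : ℕ} (Ω : Set (Pd d)) (hΩ : IsCompact Ω)
    (ρ : Measure (Ed d)) [IsProbabilityMeasure ρ]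
    (hρ2 : Integrable (fun x : Ed d => ‖x‖ ^ 2) ρ)
    (ρε : Measure (Ed d)) [IsProbabilityMeasure ρε]
    (hρε2 : Integrable (fun x : Ed d => ‖x‖ ^ 2) ρε)
    (σ : ℝ → ℝ) (Lσ : NNReal) (hσ : LipschitzWith Lσ σ)
    (f : Ed d → ℝ) (hfm : Measurable f) (hf2 : MemLp f 2 ρ) (hf2' : MemLp f 2 ρε)
    (μdag : SignedMeasure ↥Ω)
    (horthμ : ∀ w ∈ Ω, Lop σ ρ (fun x => f x - Kop σ μdag x) w = 0)
    (νdag : SignedMeasure ↥Ω)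
    (horthν : ∀ w ∈ Ω, Lop σ ρε (fun x => f x - Kop σ νdag x) w = 0) :
    ∀ ν : SignedMeasure ↥Ω,
      sInt (ν - μdag) (fun w => Lop σ ρε (fun x => f x - Kop σ ν x) (w : Pd d)) ≤
          1 / 4 * L2sq ρε (fun x => f x - Kop σ μdag x) ∧
        sInt (ν - μdag) (fun w => Lop σ ρε (fun x => f x - Kop σ ν x) (w : Pd d)) ≤
          1 / 4 * L2sq ρε (fun x => Kop σ νdag x - Kop σ μdag x) := by
  intro ν
  have hσc : Continuous σ := hσ.continuous
  obtain ⟨R0, hR0⟩ := isBounded_iff_forall_norm_le.mp hΩ.isBounded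
  set R : ℝ := max R0 0 with hRdef
  have hR0' : (0:ℝ) ≤ R := le_max_right _ _
  have hR : ∀ w ∈ Ω, ‖w‖ ≤ R := fun w hw => le_trans (hR0 w hw) (le_max_left _ _)
  set C : ℝ := |σ 0| + Lσ * R with hCdef
  have hC : (0:ℝ) ≤ C := by positivity
  have hLσ : (0:ℝ) ≤ Lσ := Lσ.2
  have hb : ∀ (w : ↥Ω) (x : Ed d), |σ (⟪(w : Pd d).1, x⟫ + (w : Pd d).2)| ≤ C * (1 + ‖x‖) := by
    intro w x
    set t := ⟪(w : Pd d).1, x⟫ + (w : Pd d).2 with ht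
    have h0 : |σ t - σ 0| ≤ Lσ * |t| := by
      have := hσ.dist_le_mul t 0
      simpa [Real.dist_eq] using this
    have h1 : |t| ≤ R * ‖x‖ + R := by
      have hi : |⟪(w : Pd d).1, x⟫| ≤ ‖(w : Pd d).1‖ * ‖x‖ := abs_real_inner_le_norm _ _
      have hw1 : ‖(w : Pd d).1‖ ≤ R := le_trans (norm_fst_le _) (hR _ w.2)
      have hw2 : |(w : Pd d).2| ≤ R := le_trans (norm_snd_le ((w : Pd d))) (hR _ w.2)
      calc |t| ≤ |⟪(w : Pd d).1, x⟫| + |(w : Pd d).2| := abs_add_le _ _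
        _ ≤ R * ‖x‖ + R := by nlinarith [norm_nonneg x]
    have h2 : |σ t| ≤ |σ 0| + Lσ * |t| := by
      have h3 := abs_sub_abs_le_abs_sub (σ t) (σ 0)
      linarith
    nlinarith [abs_nonneg (σ 0), norm_nonneg x, abs_nonneg t]
  have h1m : MemLp (fun x : Ed d => 1 + ‖x‖) 2 ρε := by
    have hn : MemLp (fun x : Ed d => ‖x‖) 2 ρε :=
      (memLp_two_iff_integrable_sq continuous_norm.aestronglyMeasurable).mpr hρε2
    exact (memLp_const (1:ℝ)).add hn
  have Ksm : ∀ μ' : SignedMeasure ↥Ω, StronglyMeasurable (Kop σ μ') := fun μ' => aux_K_sm hσc μ'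
  have Kmem : ∀ μ' : SignedMeasure ↥Ω, MemLp (Kop σ μ') 2 ρε := fun μ' =>
    aux_K_mem hσc hC hb ρε h1m μ'
  have hfsm := hfm.stronglyMeasurable
  have hdiff : ∀ x, Kop σ (ν - μdag) x = Kop σ ν x - Kop σ μdag x := by
    intro x
    exact aux_sInt_sub ν μdag (aux_cont_w σ hσc x).stronglyMeasurable (C * (1 + ‖x‖))
      (fun w => by rw [Real.norm_eq_abs]; exact hb w x)
  have hgsm : StronglyMeasurable (fun x => f x - Kop σ ν x) := hfsm.sub (Ksm ν)
  have hg2 : MemLp (fun x => f x - Kop σ ν x) 2 ρε := hf2'.sub (Kmem ν)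
  have S_eq : sInt (ν - μdag) (fun w => Lop σ ρε (fun x => f x - Kop σ ν x) (w : Pd d)) =
      ∫ x, (f x - Kop σ ν x) * (Kop σ ν x - Kop σ μdag x) ∂ρε := by
    rw [aux_fubini hσc hC hb ρε h1m hgsm hg2 (ν - μdag)]
    exact integral_congr_ae (Filter.Eventually.of_forall fun x => by simp only [hdiff x])
  constructor
  · rw [S_eq]
    have hq := aux_quarter (fun x => f x - Kop σ ν x) (fun x => Kop σ ν x - Kop σ μdag x)
      hg2 ((Kmem ν).sub (Kmem μdag))
    have he : L2sq ρε (fun x => f x - Kop σ μdag x) =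
        ∫ x, ((f x - Kop σ ν x) + (Kop σ ν x - Kop σ μdag x)) ^ 2 ∂ρε := by
      simp only [L2sq]
      exact integral_congr_ae (Filter.Eventually.of_forall fun x => by ring)
    rw [he]; exact hq
  · rw [S_eq]
    have hφ2 : MemLp (fun x => f x - Kop σ νdag x) 2 ρε := hf2'.sub (Kmem νdag)
    have hφsm : StronglyMeasurable (fun x => f x - Kop σ νdag x) := hfsm.sub (Ksm νdag)
    have hzero : ∫ x, (f x - Kop σ νdag x) * (Kop σ ν x - Kop σ μdag x) ∂ρε = 0 := by
      have hF := aux_fubini hσc hC hb ρε h1m hφsm hφ2 (ν - μdag)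
      have h0 : (fun w : ↥Ω => Lop σ ρε (fun x => f x - Kop σ νdag x) (w : Pd d)) =
          fun _ => (0:ℝ) := funext fun w => horthν _ w.2
      rw [h0] at hF
      simp only [sInt, integral_zero, sub_zero] at hF
      calc ∫ x, (f x - Kop σ νdag x) * (Kop σ ν x - Kop σ μdag x) ∂ρε
          = ∫ x, (f x - Kop σ νdag x) * Kop σ (ν - μdag) x ∂ρε :=
            integral_congr_ae (Filter.Eventually.of_forall fun x => by simp only [hdiff x])
        _ = 0 := hF.symm
    have ia : Integrable (fun x => (f x - Kop σ νdag x) * (Kop σ ν x - Kop σ μdag x)) ρε :=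
      aux_mul_integrable' hφ2 ((Kmem ν).sub (Kmem μdag))
    have ib : Integrable
        (fun x => (Kop σ νdag x - Kop σ ν x) * (Kop σ ν x - Kop σ μdag x)) ρε :=
      aux_mul_integrable' ((Kmem νdag).sub (Kmem ν)) ((Kmem ν).sub (Kmem μdag))
    have split : ∫ x, (f x - Kop σ ν x) * (Kop σ ν x - Kop σ μdag x) ∂ρε =
        (∫ x, (f x - Kop σ νdag x) * (Kop σ ν x - Kop σ μdag x) ∂ρε) +
        ∫ x, (Kop σ νdag x - Kop σ ν x) * (Kop σ ν x - Kop σ μdag x) ∂ρε := by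
      rw [← integral_add ia ib]
      exact integral_congr_ae (Filter.Eventually.of_forall fun x => by ring)
    rw [split, hzero, zero_add]
    have hq := aux_quarter (fun x => Kop σ νdag x - Kop σ ν x)
      (fun x => Kop σ ν x - Kop σ μdag x) ((Kmem νdag).sub (Kmem ν)) ((Kmem ν).sub (Kmem μdag))
    have he : L2sq ρε (fun x => Kop σ νdag x - Kop σ μdag x) =
        ∫ x, ((Kop σ νdag x - Kop σ ν x) + (Kop σ ν x - Kop σ μdag x)) ^ 2 ∂ρε := by
      simp only [L2sq]
      exact integral_congr_ae (Filter.Eventually.of_forall fun x => by ring)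
    rw [he]; exact hq


end
end
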